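/- arXiv:2103.06536 — 5 statements merged into one kernel-verified Lean document; each statement's English description precedes it below -/
import Mathlib

section
/- Let n₀ be a positive integer. Assume that every finite simple graph G' with 1 ≤ n(G') ≤ n₀ satisfies: G' does not contain C_4 as a topological minor if and only if G' satisfies the C4-condition. Then every finite simple graph G with n(G) = n₀ that contains no diamond as a subgraph satisfies n(G) − m(G) + c₃(G) ≤ cc(G). -/
open SimpleGraph

/-- The internal vertices of a walk: its support minus the two endpoints. -/
def SimpleGraph.Walk.internalSupport {V : Type*} {G : SimpleGraph V} {u v : V}
    (p : G.Walk u v) : List V :=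
  p.support.tail.dropLast

/-- `G` contains `H` as a topological minor: there is an injective map `φ` on vertices and,
for each edge `{x,y}` of `H`, a path in `G` from `φ x` to `φ y` (one path per edge, encoded
symmetrically on ordered adjacent pairs), such that for any two distinct edges of `H` no
internal vertex of the path of one edge lies on the path of the other edge. -/
def SimpleGraph.IsTopMinor {V W : Type*} (H : SimpleGraph V) (G : SimpleGraph W) : Prop :=
  ∃ (φ : V → W) (σ : ∀ ⦃x y : V⦄, H.Adj x y → G.Walk (φ x) (φ y)),
    Function.Injective φ ∧
    (∀ ⦃x y⦄ (h : H.Adj x y), (σ h).IsPath) ∧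
    (∀ ⦃x y⦄ (h : H.Adj x y), σ h.symm = (σ h).reverse) ∧
    (∀ ⦃x y x' y'⦄ (h : H.Adj x y) (h' : H.Adj x' y'),
      s(x, y) ≠ s(x', y') →
      ∀ w ∈ (σ h).internalSupport, w ∉ (σ h').support)

/-- `G` contains the diamond (`K₄` minus an edge) as a subgraph. -/
def SimpleGraph.HasDiamond {V : Type*} (G : SimpleGraph V) : Prop :=
  ∃ a b c d : V, a ≠ b ∧ a ≠ c ∧ a ≠ d ∧ b ≠ c ∧ b ≠ d ∧ c ≠ d ∧
    G.Adj a b ∧ G.Adj a c ∧ G.Adj b c ∧ G.Adj b d ∧ G.Adj c d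

/-- `m(G)`: the number of edges of `G`. -/
noncomputable def SimpleGraph.numEdges {V : Type*} (G : SimpleGraph V) : ℕ :=
  Nat.card G.edgeSet

/-- `c₃(G)`: the number of triangles of `G` (3-element vertex sets that are pairwise
adjacent). -/
noncomputable def SimpleGraph.numTriangles {V : Type*} (G : SimpleGraph V) : ℕ :=
  Nat.card (G.cliqueSet 3)

/-- `cc(G)`: the number of connected components of `G`. -/
noncomputable def SimpleGraph.numComponents {V : Type*} (G : SimpleGraph V) : ℕ :=
  Nat.card G.ConnectedComponent

/-- The `C₄`-condition: `G` contains no diamond as a subgraph and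
`n(G) - m(G) + c₃(G) = cc(G)`. -/
def C4Condition {V : Type*} [Fintype V] (G : SimpleGraph V) : Prop :=
  ¬ G.HasDiamond ∧
    (Fintype.card V : ℤ) - G.numEdges + G.numTriangles = G.numComponents

/-! ### Auxiliary lemmas -/

/-- Deleting an edge whose endpoints remain reachable preserves reachability. -/
lemma StateSix.reach_del {V : Type*} {G : SimpleGraph V} {u v : V}
    (h' : (G.deleteEdges {s(u,v)}).Reachable u v) :
    ∀ {a b : V}, G.Reachable a b → (G.deleteEdges {s(u,v)}).Reachable a b := by
  intro a b ⟨p⟩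
  induction p with
  | nil => rfl
  | @cons a c b h q ih =>
    refine Reachable.trans ?_ ih
    by_cases he : s(a, c) = s(u, v)
    · rw [Sym2.eq_iff] at he
      rcases he with ⟨rfl, rfl⟩ | ⟨rfl, rfl⟩
      · exact h'
      · exact h'.symm
    · exact Adj.reachable (by simp [he, h])

/-- Deleting an edge whose endpoints remain reachable preserves the number of
connected components. -/
lemma StateSix.numComponents_del {V : Type*} {G : SimpleGraph V} {u v : V}
    (h' : (G.deleteEdges {s(u,v)}).Reachable u v) :
    G.numComponents = (G.deleteEdges {s(u,v)}).numComponents := by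
  refine (Nat.card_eq_of_bijective
    (ConnectedComponent.map (Hom.ofLE (deleteEdges_le _))) ⟨?_, ?_⟩).symm
  · refine ConnectedComponent.ind₂ (fun a b hab => ?_)
    simp only [ConnectedComponent.map_mk, Hom.coe_ofLE, id_eq, ConnectedComponent.eq] at hab ⊢
    exact StateSix.reach_del h' hab
  · refine ConnectedComponent.ind (fun w => ?_)
    exact ⟨(G.deleteEdges {s(u,v)}).connectedComponentMk w, by rfl⟩

/-- Deleting one edge decreases the number of edges by one. -/
lemma StateSix.numEdges_del {V : Type*} [Fintype V] {G : SimpleGraph V} {e : Sym2 V}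
    (he : e ∈ G.edgeSet) :
    G.numEdges = (G.deleteEdges {e}).numEdges + 1 := by
  classical
  simp only [SimpleGraph.numEdges, Nat.card_coe_set_eq, edgeSet_deleteEdges]
  rw [Set.ncard_diff_singleton_add_one he (Set.toFinite _)]

/-- In a diamond-free graph, deleting one edge decreases the number of triangles by at
most one. -/
lemma StateSix.numTriangles_del {V : Type*} [Fintype V] {G : SimpleGraph V} {u v : V}
    (hadj : G.Adj u v) (hdiam : ¬ G.HasDiamond) :
    G.numTriangles ≤ (G.deleteEdges {s(u,v)}).numTriangles + 1 := by
  classical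
  rw [SimpleGraph.numTriangles, SimpleGraph.numTriangles]
  set G' := G.deleteEdges {s(u,v)} with hG'
  have hsub : G'.cliqueSet 3 ⊆ G.cliqueSet 3 := cliqueSet_mono (deleteEdges_le _)
  have key : ∀ t ∈ G.cliqueSet 3 \ G'.cliqueSet 3,
      u ∈ t ∧ v ∈ t ∧ ∃ a ∈ t, a ≠ u ∧ a ≠ v ∧ G.Adj a u ∧ G.Adj a v := by
    intro t ⟨ht, ht'⟩
    obtain ⟨hclique, hcard⟩ := ht
    have huv : u ∈ t ∧ v ∈ t := by
      by_contra hcon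
      apply ht'
      refine ⟨fun x hx y hy hxy => ?_, hcard⟩
      have hxy' : G.Adj x y := hclique hx hy hxy
      rw [hG', deleteEdges_adj]
      refine ⟨hxy', ?_⟩
      intro hmem
      rw [Set.mem_singleton_iff, Sym2.eq_iff] at hmem
      rcases hmem with ⟨rfl, rfl⟩ | ⟨rfl, rfl⟩
      · exact hcon ⟨by simpa using hx, by simpa using hy⟩
      · exact hcon ⟨by simpa using hy, by simpa using hx⟩
    obtain ⟨hu, hv⟩ := huv
    refine ⟨hu, hv, ?_⟩
    have hex : ∃ a ∈ t, a ≠ u ∧ a ≠ v := by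
      by_contra hcon
      push_neg at hcon
      have hsub2 : t ⊆ {u, v} := by
        intro a ha
        rcases eq_or_ne a u with rfl | h1
        · simp
        · simp [hcon a ha h1]
      have := Finset.card_le_card hsub2
      rw [hcard] at this
      have h2 : ({u, v} : Finset V).card ≤ 2 := (Finset.card_insert_le _ _).trans (by simp)
      omega
    obtain ⟨a, ha, hau, hav⟩ := hex
    exact ⟨a, ha, hau, hav, hclique (by simpa using ha) (by simpa using hu) hau,
      hclique (by simpa using ha) (by simpa using hv) hav⟩
  have hss : (G.cliqueSet 3 \ G'.cliqueSet 3).Subsingleton := by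
    intro t ht s hs
    obtain ⟨hut, hvt, a, hat, hau, hav, haau, haav⟩ := key t ht
    obtain ⟨hus, hvs, d, hds, hdu, hdv, hdau, hdav⟩ := key s hs
    have had : a = d := by
      by_contra hne
      exact hdiam ⟨a, u, v, d, hau, hav, hne, hadj.ne, hdu.symm, hdv.symm,
        haau, haav, hadj, hdau.symm, hdav.symm⟩
    subst had
    have h1 : ({u, v, a} : Finset V) ⊆ t := by
      intro x hx; simp at hx; rcases hx with rfl | rfl | rfl <;> assumption
    have h2 : ({u, v, a} : Finset V) ⊆ s := by
      intro x hx; simp at hx; rcases hx with rfl | rfl | rfl <;> assumption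
    have hc : ({u, v, a} : Finset V).card = 3 := by
      rw [Finset.card_insert_of_notMem (by simp [hadj.ne, Ne.symm hau]),
        Finset.card_insert_of_notMem (by simp [Ne.symm hav])]
      simp
    have et := Finset.eq_of_subset_of_card_le h1 (by rw [hc]; exact ht.1.2.le)
    have es := Finset.eq_of_subset_of_card_le h2 (by rw [hc]; exact hs.1.2.le)
    rw [← et, ← es]
  calc Nat.card (G.cliqueSet 3)
      = (G'.cliqueSet 3 ∪ (G.cliqueSet 3 \ G'.cliqueSet 3)).ncard := by
        rw [Set.union_diff_cancel hsub, Nat.card_coe_set_eq]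
    _ ≤ (G'.cliqueSet 3).ncard + (G.cliqueSet 3 \ G'.cliqueSet 3).ncard :=
        Set.ncard_union_le _ _
    _ ≤ Nat.card (G'.cliqueSet 3) + 1 := by
        rw [Nat.card_coe_set_eq]
        exact Nat.add_le_add_left
          ((Set.ncard_le_one (Set.toFinite _)).mpr (fun a ha b hb => hss ha hb)) _

lemma StateSix.internal_sub {V : Type*} {G : SimpleGraph V} {u v : V} (p : G.Walk u v) :
    ∀ w ∈ p.internalSupport, w ∈ p.support := by
  intro w hw
  exact List.tail_subset _ (List.dropLast_subset _ hw)

lemma StateSix.adj_of_internal_nil {V : Type*} {G : SimpleGraph V} {u v : V} (p : G.Walk u v)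
    (hne : u ≠ v) (h : p.internalSupport = []) : G.Adj u v := by
  cases p with
  | nil => exact absurd rfl hne
  | @cons _ c _ hadj q =>
    unfold SimpleGraph.Walk.internalSupport at h
    rw [SimpleGraph.Walk.support_cons] at h
    simp only [List.tail_cons] at h
    have := q.support_ne_nil
    have hlen : q.support.length ≤ 1 := by
      by_contra hcon
      push_neg at hcon
      have h2 : q.support.dropLast.length = 0 := by rw [h]; rfl
      rw [List.length_dropLast] at h2
      omega
    rw [SimpleGraph.Walk.length_support] at hlen
    have : q.length = 0 := by omega
    have := SimpleGraph.Walk.eq_of_length_eq_zero this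
    subst this
    exact hadj

/-- A graph containing `C₄` as a topological minor is not acyclic. -/
lemma StateSix.topminor_not_acyclic {W : Type*} {G : SimpleGraph W}
    (h : (cycleGraph 4).IsTopMinor G) : ¬ G.IsAcyclic := by
  classical
  obtain ⟨φ, σ, hinj, hpath, hsym, hdisj⟩ := h
  intro hac
  have hA : ∀ (a b c d : Fin 4), (cycleGraph 4).Adj a b → (cycleGraph 4).Adj b c →
      (cycleGraph 4).Adj c d → (cycleGraph 4).Adj d a →
      s(a,b) ≠ s(b,c) → s(a,b) ≠ s(c,d) → s(a,b) ≠ s(d,a) → G.Adj (φ a) (φ b) := by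
    intro a b c d hab hbc hcd hda hn1 hn2 hn3
    set q : G.Walk (φ a) (φ b) := ((σ hbc).append ((σ hcd).append (σ hda))).reverse with hq
    have hPQ : σ hab = (q.toPath : G.Walk _ _) := by
      have := hac.path_unique ⟨σ hab, hpath hab⟩ q.toPath
      exact congrArg Subtype.val this
    by_cases hint : (σ hab).internalSupport = []
    · exact StateSix.adj_of_internal_nil _ (fun he => hab.ne (hinj he)) hint
    · exfalso
      obtain ⟨w, hw⟩ := List.exists_mem_of_ne_nil _ hint
      have hws : w ∈ (σ hab).support := StateSix.internal_sub _ _ hw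
      rw [hPQ] at hws
      have hwq : w ∈ q.support := q.support_toPath_subset hws
      rw [hq, Walk.support_reverse, List.mem_reverse, Walk.mem_support_append_iff,
        Walk.mem_support_append_iff] at hwq
      rcases hwq with h1 | h2 | h3
      · exact hdisj hab hbc hn1 w hw h1
      · exact hdisj hab hcd hn2 w hw h2
      · exact hdisj hab hda hn3 w hw h3
  have A01 : G.Adj (φ 0) (φ 1) := hA 0 1 2 3 (by decide) (by decide) (by decide) (by decide)
    (by decide) (by decide) (by decide)
  have A12 : G.Adj (φ 1) (φ 2) := hA 1 2 3 0 (by decide) (by decide) (by decide) (by decide)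
    (by decide) (by decide) (by decide)
  have A23 : G.Adj (φ 2) (φ 3) := hA 2 3 0 1 (by decide) (by decide) (by decide) (by decide)
    (by decide) (by decide) (by decide)
  have A30 : G.Adj (φ 3) (φ 0) := hA 3 0 1 2 (by decide) (by decide) (by decide) (by decide)
    (by decide) (by decide) (by decide)
  have dist : ∀ i j : Fin 4, i ≠ j → φ i ≠ φ j := fun i j hij h => hij (hinj h)
  refine hac (Walk.cons A01 (.cons A12 (.cons A23 (.cons A30 .nil)))) ?_
  have d01 := dist 0 1 (by decide); have d02 := dist 0 2 (by decide)
  have d03 := dist 0 3 (by decide); have d12 := dist 1 2 (by decide)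
  have d13 := dist 1 3 (by decide); have d23 := dist 2 3 (by decide)
  simp [Walk.isCycle_def, Walk.isTrail_def, Sym2.eq_iff, List.nodup_cons, d01, d02, d03, d12,
    d13, d23, d01.symm, d02.symm, d03.symm, d12.symm, d13.symm, d23.symm]

/-- Diamond containment is monotone. -/
lemma StateSix.hasDiamond_mono {V : Type*} {G G' : SimpleGraph V} (hle : G' ≤ G)
    (h : G'.HasDiamond) : G.HasDiamond := by
  obtain ⟨a, b, c, d, h1, h2, h3, h4, h5, h6, e1, e2, e3, e4, e5⟩ := h
  exact ⟨a, b, c, d, h1, h2, h3, h4, h5, h6, hle e1, hle e2, hle e3, hle e4, hle e5⟩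

/-- If, for every finite simple graph `G'` with `1 ≤ n(G') ≤ n₀`, excluding `C₄` as a
topological minor is equivalent to the `C₄`-condition, then every diamond-free finite simple
graph `G` with `n(G) = n₀` satisfies `n(G) - m(G) + c₃(G) ≤ cc(G)`. -/
theorem statement_6 (n₀ : ℕ) (hn₀ : 1 ≤ n₀)
    (hyp : ∀ (V' : Type) [Fintype V'] (G' : SimpleGraph V'),
      1 ≤ Fintype.card V' → Fintype.card V' ≤ n₀ →
      (¬ (SimpleGraph.cycleGraph 4).IsTopMinor G' ↔ C4Condition G'))
    {V : Type} [Fintype V] (G : SimpleGraph V)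
    (hn : Fintype.card V = n₀) (hdiam : ¬ G.HasDiamond) :
    (Fintype.card V : ℤ) - G.numEdges + G.numTriangles ≤ G.numComponents := by
  classical
  suffices key : ∀ (k : ℕ) (G : SimpleGraph V), G.numEdges ≤ k → ¬ G.HasDiamond →
      (Fintype.card V : ℤ) - G.numEdges + G.numTriangles ≤ G.numComponents by
    exact key G.numEdges G le_rfl hdiam
  intro k
  induction k with
  | zero =>
    intro G hm hdiam
    by_cases top : (SimpleGraph.cycleGraph 4).IsTopMinor G
    · exfalso
      have hnb : ∃ e ∈ G.edgeSet, ¬ G.IsBridge e := by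
        by_contra hcon
        push_neg at hcon
        exact StateSix.topminor_not_acyclic top (isAcyclic_iff_forall_edge_isBridge.mpr hcon)
      obtain ⟨e, he, -⟩ := hnb
      have : Nonempty G.edgeSet := ⟨⟨e, he⟩⟩
      have hpos : 0 < G.numEdges := Nat.card_pos
      omega
    · have hcond := (hyp V G (by omega) hn.le).mp top
      exact le_of_eq hcond.2
  | succ k ih =>
    intro G hm hdiam
    by_cases top : (SimpleGraph.cycleGraph 4).IsTopMinor G
    · have hnb : ∃ e ∈ G.edgeSet, ¬ G.IsBridge e := by
        by_contra hcon
        push_neg at hcon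
        exact StateSix.topminor_not_acyclic top (isAcyclic_iff_forall_edge_isBridge.mpr hcon)
      obtain ⟨e, he, hnbe⟩ := hnb
      obtain ⟨u, v, he, hnbe⟩ : ∃ u v, s(u,v) ∈ G.edgeSet ∧ ¬ G.IsBridge s(u,v) := by
        refine Sym2.ind (fun u v he hnbe => ⟨u, v, he, hnbe⟩) e he hnbe
      have hadj : G.Adj u v := he
      have hreach : (G.deleteEdges {s(u,v)}).Reachable u v := by
        rw [isBridge_iff] at hnbe
        by_contra h0
        exact hnbe h0
      set G' := G.deleteEdges {s(u,v)} with hG'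
      have hm' : G.numEdges = G'.numEdges + 1 := StateSix.numEdges_del he
      have ht' : G.numTriangles ≤ G'.numTriangles + 1 := StateSix.numTriangles_del hadj hdiam
      have hc' : G.numComponents = G'.numComponents := StateSix.numComponents_del hreach
      have hdiam' : ¬ G'.HasDiamond :=
        fun h => hdiam (StateSix.hasDiamond_mono (deleteEdges_le _) h)
      have hih := ih G' (by omega) hdiam'
      rw [hm', hc']
      push_cast at hih ⊢
      omega
    · have hcond := (hyp V G (by omega) hn.le).mp top
      exact le_of_eq hcond.2
end

section
/- Every finite simple graph G that contains no diamond as a subgraph satisfies n(G) − m(G) + c₃(G) ≤ cc(G). -/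
open SimpleGraph

section Aux

set_option linter.unusedSectionVars false

variable {V : Type} [Fintype V]

private lemma reach_cases {G : SimpleGraph V} (u v : V) {x y : V} (p : G.Walk x y) :
    (G.deleteEdges {s(u,v)}).Reachable x y ∨
      ((G.deleteEdges {s(u,v)}).Reachable x u ∧ (G.deleteEdges {s(u,v)}).Reachable v y) ∨
      ((G.deleteEdges {s(u,v)}).Reachable x v ∧ (G.deleteEdges {s(u,v)}).Reachable u y) := by
  induction p with
  | nil => exact Or.inl (Reachable.refl _)
  | @cons a b c h p ih =>
    by_cases he : s(a, b) = s(u, v)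
    · rw [Sym2.eq_iff] at he
      rcases he with ⟨rfl, rfl⟩ | ⟨rfl, rfl⟩
      · rcases ih with r | ⟨r1, r2⟩ | ⟨r1, r2⟩
        · exact Or.inr (Or.inl ⟨Reachable.refl _, r⟩)
        · exact Or.inl (r1.symm.trans r2)
        · exact Or.inl r2
      · rcases ih with r | ⟨r1, r2⟩ | ⟨r1, r2⟩
        · exact Or.inr (Or.inr ⟨Reachable.refl _, r⟩)
        · exact Or.inl r2
        · exact Or.inl (r1.symm.trans r2)
    · have hadj : (G.deleteEdges {s(u,v)}).Adj a b := by
        rw [deleteEdges_adj]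
        exact ⟨h, by simpa using he⟩
      rcases ih with r | ⟨r1, r2⟩ | ⟨r1, r2⟩
      · exact Or.inl (hadj.reachable.trans r)
      · exact Or.inr (Or.inl ⟨hadj.reachable.trans r1, r2⟩)
      · exact Or.inr (Or.inr ⟨hadj.reachable.trans r1, r2⟩)

private lemma cc_surj_le (G G' : SimpleGraph V) (hle : G' ≤ G) :
    Nat.card G.ConnectedComponent ≤ Nat.card G'.ConnectedComponent := by
  apply Nat.card_le_card_of_surjective
    (SimpleGraph.ConnectedComponent.map (Hom.ofLE hle))
  intro c
  refine c.ind fun w => ⟨G'.connectedComponentMk w, rfl⟩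

private lemma cc_delete_eq {G : SimpleGraph V} {u v : V}
    (hr : (G.deleteEdges {s(u,v)}).Reachable u v) :
    Nat.card (G.deleteEdges {s(u,v)}).ConnectedComponent = Nat.card G.ConnectedComponent := by
  have hle : G.deleteEdges {s(u,v)} ≤ G := deleteEdges_le _
  refine le_antisymm ?_ (cc_surj_le _ _ hle)
  apply Nat.card_le_card_of_injective
    (SimpleGraph.ConnectedComponent.map (Hom.ofLE hle))
  intro c1 c2
  refine SimpleGraph.ConnectedComponent.ind₂ (fun x y h => ?_) c1 c2
  have hxy : G.Reachable x y := SimpleGraph.ConnectedComponent.exact h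
  refine hxy.elim fun p => ?_
  rcases reach_cases u v p with r | ⟨r1, r2⟩ | ⟨r1, r2⟩
  · exact ConnectedComponent.sound r
  · exact ConnectedComponent.sound (r1.trans (hr.trans r2))
  · exact ConnectedComponent.sound (r1.trans (hr.symm.trans r2))

private lemma cc_delete_le (G : SimpleGraph V) (u v : V) :
    Nat.card (G.deleteEdges {s(u,v)}).ConnectedComponent ≤ Nat.card G.ConnectedComponent + 1 := by
  classical
  by_cases hr : (G.deleteEdges {s(u,v)}).Reachable u v
  · rw [cc_delete_eq hr]
    omega
  · set G' := G.deleteEdges {s(u,v)} with hG'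
    have hle : G' ≤ G := deleteEdges_le _
    have key : Nat.card G'.ConnectedComponent ≤ Nat.card (G.ConnectedComponent ⊕ Unit) := by
      apply Nat.card_le_card_of_injective
        (fun c => if c = G'.connectedComponentMk u then Sum.inr () else
          Sum.inl (c.map (Hom.ofLE hle)))
      intro c1 c2 h
      by_cases h1 : c1 = G'.connectedComponentMk u <;>
        by_cases h2 : c2 = G'.connectedComponentMk u
      · rw [h1, h2]
      · simp [h1, h2] at h
      · simp [h1, h2] at h
      · simp only [if_neg h1, if_neg h2, Sum.inl.injEq] at h
        revert h1 h2 h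
        refine SimpleGraph.ConnectedComponent.ind₂ (fun x y => ?_) c1 c2
        intro h1 h2 h
        have hxy : G.Reachable x y := SimpleGraph.ConnectedComponent.exact h
        refine hxy.elim fun p => ?_
        rcases reach_cases u v p with r | ⟨r1, r2⟩ | ⟨r1, r2⟩
        · exact ConnectedComponent.sound r
        · exact absurd (ConnectedComponent.sound r1) h1
        · exact absurd (ConnectedComponent.sound r2.symm) h2
    have hsum : Nat.card (G.ConnectedComponent ⊕ Unit)
        = Nat.card G.ConnectedComponent + 1 := by
      rw [Nat.card_sum]
      simp
    omega

private lemma third_vertex {s : Finset V} (hcard : s.card = 3) {u v : V}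
    (hu : u ∈ s) (hv : v ∈ s) (huv : u ≠ v) : ∃ w ∈ s, w ≠ u ∧ w ≠ v := by
  classical
  have hsub : ({u, v} : Finset V) ⊆ s := by
    intro x hx
    simp only [Finset.mem_insert, Finset.mem_singleton] at hx
    rcases hx with rfl | rfl <;> assumption
  have h2 : ({u, v} : Finset V).card = 2 := Finset.card_pair huv
  have hne : (s \ {u, v}).Nonempty := by
    rw [← Finset.card_pos, Finset.card_sdiff_of_subset hsub, hcard, h2]
    norm_num
  obtain ⟨w, hw⟩ := hne
  simp only [Finset.mem_sdiff, Finset.mem_insert, Finset.mem_singleton, not_or] at hw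
  exact ⟨w, hw.1, hw.2.1, hw.2.2⟩

private lemma cliqueSet_delete_of_no_common {G : SimpleGraph V} {u v : V} (huv : G.Adj u v)
    (hA : ¬∃ w, G.Adj u w ∧ G.Adj v w) :
    (G.deleteEdges {s(u,v)}).cliqueSet 3 = G.cliqueSet 3 := by
  apply Set.Subset.antisymm (cliqueSet_mono (deleteEdges_le _))
  intro s hs
  rw [mem_cliqueSet_iff] at hs ⊢
  refine ⟨?_, hs.2⟩
  intro x hx y hy hxy
  have hadj := hs.1 hx hy hxy
  rw [deleteEdges_adj]
  refine ⟨hadj, ?_⟩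
  simp only [Set.mem_singleton_iff]
  intro he
  rw [Sym2.eq_iff] at he
  have hus : u ∈ s ∧ v ∈ s := by
    rcases he with ⟨rfl, rfl⟩ | ⟨rfl, rfl⟩
    exacts [⟨hx, hy⟩, ⟨hy, hx⟩]
  obtain ⟨w, hws, hwu, hwv⟩ := third_vertex hs.2 hus.1 hus.2 huv.ne
  exact hA ⟨w, hs.1 hus.1 hws (Ne.symm hwu), hs.1 hus.2 hws (Ne.symm hwv)⟩

private lemma cliqueSet_delete_of_common [DecidableEq V] {G : SimpleGraph V} {u v w : V}
    (huv : G.Adj u v) (hu : G.Adj u w) (hv : G.Adj v w) (hdiam : ¬ G.HasDiamond) :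
    (G.deleteEdges {s(u,v)}).cliqueSet 3 = G.cliqueSet 3 \ {({u, v, w} : Finset V)} := by
  ext s
  simp only [Set.mem_diff, Set.mem_singleton_iff, mem_cliqueSet_iff]
  constructor
  · intro hs
    refine ⟨hs.mono (deleteEdges_le _), ?_⟩
    rintro rfl
    have hadj := hs.1 (show u ∈ (({u, v, w} : Finset V) : Set V) by simp)
      (show v ∈ (({u, v, w} : Finset V) : Set V) by simp) huv.ne
    rw [deleteEdges_adj] at hadj
    exact hadj.2 rfl
  · rintro ⟨hs, hne⟩
    refine ⟨?_, hs.2⟩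
    intro x hx y hy hxy
    have hadj := hs.1 hx hy hxy
    rw [deleteEdges_adj]
    refine ⟨hadj, ?_⟩
    simp only [Set.mem_singleton_iff]
    intro he
    rw [Sym2.eq_iff] at he
    have hus : u ∈ s ∧ v ∈ s := by
      rcases he with ⟨rfl, rfl⟩ | ⟨rfl, rfl⟩
      exacts [⟨hx, hy⟩, ⟨hy, hx⟩]
    obtain ⟨w', hw's, hw'u, hw'v⟩ := third_vertex hs.2 hus.1 hus.2 huv.ne
    have haduw' : G.Adj u w' := hs.1 hus.1 hw's (Ne.symm hw'u)
    have hadvw' : G.Adj v w' := hs.1 hus.2 hw's (Ne.symm hw'v)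
    by_cases hww : w' = w
    · subst hww
      apply hne
      have hsub : ({u, v, w'} : Finset V) ⊆ s := by
        intro z hz
        simp only [Finset.mem_insert, Finset.mem_singleton] at hz
        rcases hz with rfl | rfl | rfl
        exacts [hus.1, hus.2, hw's]
      have hcard : ({u, v, w'} : Finset V).card = 3 := by
        rw [Finset.card_insert_of_notMem (by simp [huv.ne, haduw'.ne]),
          Finset.card_insert_of_notMem (by simp [hadvw'.ne]), Finset.card_singleton]
      exact (Finset.eq_of_subset_of_card_le hsub (by rw [hs.2, hcard])).symm
    · exact hdiam ⟨w, u, v, w', hu.ne.symm, hv.ne.symm, Ne.symm hww, huv.ne, Ne.symm hw'u,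
        Ne.symm hw'v, hu.symm, hv.symm, huv, haduw', hadvw'⟩

private lemma base_case (G : SimpleGraph V) (h0 : G.numEdges = 0) :
    (Fintype.card V : ℤ) - G.numEdges + G.numTriangles ≤ G.numComponents := by
  have hE : G.edgeSet = ∅ := by
    rw [SimpleGraph.numEdges, Nat.card_coe_set_eq] at h0
    exact (Set.ncard_eq_zero (Set.toFinite _)).mp h0
  have hbot : G = ⊥ := edgeSet_eq_empty.mp hE
  subst hbot
  have ht : (⊥ : SimpleGraph V).numTriangles = 0 := by
    rw [SimpleGraph.numTriangles, (cliqueFree_bot (by norm_num)).cliqueSet]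
    simp
  have hcc : (⊥ : SimpleGraph V).numComponents = Fintype.card V := by
    rw [SimpleGraph.numComponents, ← Nat.card_eq_fintype_card]
    refine (Nat.card_eq_of_bijective (⊥ : SimpleGraph V).connectedComponentMk ⟨?_, ?_⟩).symm
    · intro a b h
      exact reachable_bot.mp (SimpleGraph.ConnectedComponent.exact h)
    · intro c
      exact c.ind fun w => ⟨w, rfl⟩
  rw [h0, ht, hcc]
  simp

private lemma main_aux [DecidableEq V] :
    ∀ (n : ℕ) (G : SimpleGraph V), G.numEdges ≤ n → ¬ G.HasDiamond →
      (Fintype.card V : ℤ) - G.numEdges + G.numTriangles ≤ G.numComponents := by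
  intro n
  induction n with
  | zero =>
    intro G hle _
    exact base_case G (Nat.le_zero.mp hle)
  | succ n ih =>
    intro G hle hdiam
    by_cases h0 : G.numEdges = 0
    · exact base_case G h0
    · have hne : G.edgeSet.Nonempty := by
        rw [SimpleGraph.numEdges, Nat.card_coe_set_eq] at h0
        exact Set.nonempty_of_ncard_ne_zero h0
      obtain ⟨e, he⟩ := hne
      revert he
      induction e using Sym2.ind with
      | _ u v =>
      intro he
      have huv : G.Adj u v := he
      have hle' : G.deleteEdges {s(u,v)} ≤ G := deleteEdges_le _
      have hE1 : 1 ≤ G.numEdges := Nat.one_le_iff_ne_zero.mpr h0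
      have hE' : (G.deleteEdges {s(u,v)}).numEdges = G.numEdges - 1 := by
        rw [SimpleGraph.numEdges, SimpleGraph.numEdges, edgeSet_deleteEdges,
          Nat.card_coe_set_eq, Nat.card_coe_set_eq]
        exact Set.ncard_diff_singleton_of_mem he
      have hdiam' : ¬ (G.deleteEdges {s(u,v)}).HasDiamond := by
        rintro ⟨a, b, c, d, h1, h2, h3, h4, h5, h6, h7, h8, h9, h10, h11⟩
        exact hdiam ⟨a, b, c, d, h1, h2, h3, h4, h5, h6, hle' h7, hle' h8, hle' h9,
          hle' h10, hle' h11⟩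
      have hIH := ih (G.deleteEdges {s(u,v)}) (by omega) hdiam'
      by_cases hw : ∃ w, G.Adj u w ∧ G.Adj v w
      · obtain ⟨w, hu, hv⟩ := hw
        have hT : ({u, v, w} : Finset V) ∈ G.cliqueSet 3 := by
          rw [mem_cliqueSet_iff, is3Clique_triple_iff]
          exact ⟨huv, hu, hv⟩
        have ht' : (G.deleteEdges {s(u,v)}).numTriangles = G.numTriangles - 1 := by
          rw [SimpleGraph.numTriangles, SimpleGraph.numTriangles,
            cliqueSet_delete_of_common huv hu hv hdiam,
            Nat.card_coe_set_eq, Nat.card_coe_set_eq]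
          exact Set.ncard_diff_singleton_of_mem hT
        have ht1 : 1 ≤ G.numTriangles := by
          rw [SimpleGraph.numTriangles, Nat.card_coe_set_eq]
          have := (Set.ncard_pos (Set.toFinite _)).mpr ⟨_, hT⟩
          omega
        have hreach : (G.deleteEdges {s(u,v)}).Reachable u v := by
          have h1 : (G.deleteEdges {s(u,v)}).Adj u w := by
            rw [deleteEdges_adj]
            refine ⟨hu, ?_⟩
            simp only [Set.mem_singleton_iff, Sym2.eq_iff]
            rintro (⟨-, rfl⟩ | ⟨rfl, rfl⟩)
            · exact G.loopless.irrefl _ hv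
            · exact G.loopless.irrefl _ huv
          have h2 : (G.deleteEdges {s(u,v)}).Adj w v := by
            rw [deleteEdges_adj]
            refine ⟨hv.symm, ?_⟩
            simp only [Set.mem_singleton_iff, Sym2.eq_iff]
            rintro (⟨rfl, -⟩ | ⟨rfl, rfl⟩)
            · exact G.loopless.irrefl _ hu
            · exact G.loopless.irrefl _ hv
          exact h1.reachable.trans h2.reachable
        have hcc := cc_delete_eq hreach
        simp only [SimpleGraph.numComponents] at hIH ⊢
        omega
      · have ht' : (G.deleteEdges {s(u,v)}).numTriangles = G.numTriangles := by
          rw [SimpleGraph.numTriangles, SimpleGraph.numTriangles,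
            cliqueSet_delete_of_no_common huv hw]
        have hcc := cc_delete_le G u v
        simp only [SimpleGraph.numComponents] at hIH ⊢
        omega

end Aux

/-- Every diamond-free finite simple graph satisfies `n(G) - m(G) + c₃(G) ≤ cc(G)`. -/
theorem statement_7 {V : Type} [Fintype V] (G : SimpleGraph V) (hdiam : ¬ G.HasDiamond) :
    (Fintype.card V : ℤ) - G.numEdges + G.numTriangles ≤ G.numComponents := by
  classical
  exact main_aux G.numEdges G le_rfl hdiam
end

section
/- Every nonempty finite simple graph G that contains no diamond as a subgraph and satisfies n(G) − m(G) + c₃(G) = cc(G) has a vertex of degree at most two. -/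
open SimpleGraph

section Aux

variable {V : Type} [DecidableEq V] {G : SimpleGraph V}

/-- The third element of a triangle. -/
lemma aux_third_elem {s : Finset V} (hs : s.card = 3) {u w : V} (hu : u ∈ s) (hw : w ∈ s)
    (huw : u ≠ w) : ∃ x ∈ s, x ≠ u ∧ x ≠ w ∧ ∀ y ∈ s, y = u ∨ y = w ∨ y = x := by
  have h1 : ((s.erase u).erase w).card = 1 := by
    rw [Finset.card_erase_of_mem (Finset.mem_erase.2 ⟨huw.symm, hw⟩),
      Finset.card_erase_of_mem hu, hs]
  obtain ⟨x, hx⟩ := Finset.card_eq_one.1 h1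
  have hxm : x ∈ (s.erase u).erase w := hx ▸ Finset.mem_singleton_self x
  obtain ⟨hxw, hxu, hxs⟩ : x ≠ w ∧ x ≠ u ∧ x ∈ s := by
    simpa [Finset.mem_erase, and_assoc] using hxm
  refine ⟨x, hxs, hxu, hxw, fun y hy => ?_⟩
  by_contra h
  push_neg at h
  obtain ⟨h1', h2', h3'⟩ := h
  have : y ∈ (s.erase u).erase w := Finset.mem_erase.2 ⟨h2', Finset.mem_erase.2 ⟨h1', hy⟩⟩
  rw [hx] at this
  exact h3' (Finset.mem_singleton.1 this)

/-- Two distinct triangles sharing two vertices give a diamond. -/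
lemma aux_shared_edge_diamond {s₁ s₂ : Finset V} (h1 : G.IsNClique 3 s₁)
    (h2 : G.IsNClique 3 s₂) (hne : s₁ ≠ s₂) {u w : V} (huw : u ≠ w) (hu1 : u ∈ s₁)
    (hw1 : w ∈ s₁) (hu2 : u ∈ s₂) (hw2 : w ∈ s₂) : G.HasDiamond := by
  obtain ⟨a, ha, hau, haw, hall1⟩ := aux_third_elem h1.card_eq hu1 hw1 huw
  obtain ⟨b, hb, hbu, hbw, hall2⟩ := aux_third_elem h2.card_eq hu2 hw2 huw
  have hab : a ≠ b := by
    rintro rfl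
    apply hne
    ext y
    constructor
    · intro hy
      rcases hall1 y hy with rfl | rfl | rfl <;> assumption
    · intro hy
      rcases hall2 y hy with rfl | rfl | rfl <;> assumption
  exact ⟨a, u, w, b, hau, haw, hab, huw, Ne.symm hbu, Ne.symm hbw,
    h1.1 ha hu1 hau, h1.1 ha hw1 haw, h1.1 hu1 hw1 huw,
    h2.1 hu2 hb (Ne.symm hbu), h2.1 hw2 hb (Ne.symm hbw)⟩

/-- Pick an edge inside a vertex set (meaningful when it is a clique). -/
noncomputable def pickEdge (G : SimpleGraph V) [Nonempty V] (s : Finset V) : Sym2 V :=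
  @dite _ (∃ p : V × V, p.1 ∈ s ∧ p.2 ∈ s ∧ G.Adj p.1 p.2) (Classical.dec _)
    (fun h => s(h.choose.1, h.choose.2))
    (fun _ => s(Classical.arbitrary V, Classical.arbitrary V))

omit [DecidableEq V] in
lemma pickEdge_spec [Nonempty V] {s : Finset V} (hs : G.IsNClique 3 s) :
    ∃ a b, pickEdge G s = s(a, b) ∧ a ∈ s ∧ b ∈ s ∧ G.Adj a b := by
  have hex : ∃ p : V × V, p.1 ∈ s ∧ p.2 ∈ s ∧ G.Adj p.1 p.2 := by
    obtain ⟨a, ha, b, hb, hab⟩ := Finset.one_lt_card.mp (by rw [hs.card_eq]; norm_num)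
    exact ⟨(a, b), ha, hb, hs.1 ha hb hab⟩
  refine ⟨hex.choose.1, hex.choose.2, ?_, hex.choose_spec.1, hex.choose_spec.2.1,
    hex.choose_spec.2.2⟩
  rw [pickEdge, dif_pos hex]

end Aux

/-- Every nonempty diamond-free finite simple graph with `n(G) - m(G) + c₃(G) = cc(G)` has a
vertex of degree at most two. -/
theorem statement_10 {V : Type} [Fintype V] [Nonempty V] (G : SimpleGraph V)
    (hdiam : ¬ G.HasDiamond)
    (heq : (Fintype.card V : ℤ) - G.numEdges + G.numTriangles = G.numComponents) :
    ∃ v : V, Nat.card (G.neighborSet v) ≤ 2 := by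
  classical
  set n := Fintype.card V with hn
  set T := G.cliqueFinset 3 with hTdef
  set E := G.edgeFinset with hEdef
  -- basic cardinality identifications
  have hm : G.numEdges = E.card := by
    rw [SimpleGraph.numEdges, Nat.card_eq_fintype_card, hEdef, SimpleGraph.edgeFinset_card]
  have ht : G.numTriangles = T.card := by
    rw [SimpleGraph.numTriangles, Nat.card_eq_fintype_card, hTdef]
    rw [← Set.toFinset_card]
    congr 1
    ext s
    simp [SimpleGraph.mem_cliqueFinset_iff, SimpleGraph.mem_cliqueSet_iff]
  have hcc1 : 1 ≤ G.numComponents := by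
    have : Nonempty G.ConnectedComponent :=
      ⟨G.connectedComponentMk (Classical.arbitrary V)⟩
    exact Nat.card_pos
  -- the chosen edges
  have hTspec : ∀ s ∈ T, ∃ a b, pickEdge G s = s(a, b) ∧ a ∈ s ∧ b ∈ s ∧ G.Adj a b :=
    fun s hs => pickEdge_spec (SimpleGraph.mem_cliqueFinset_iff.1 hs)
  have hinj : Set.InjOn (pickEdge G) T := by
    intro s₁ hs₁ s₂ hs₂ hps
    by_contra hne
    obtain ⟨a₁, b₁, he₁, ha₁, hb₁, hadj₁⟩ := hTspec s₁ hs₁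
    obtain ⟨a₂, b₂, he₂, ha₂, hb₂, hadj₂⟩ := hTspec s₂ hs₂
    rw [he₁, he₂] at hps
    rcases Sym2.eq_iff.1 hps with ⟨rfl, rfl⟩ | ⟨rfl, rfl⟩
    · exact hdiam (aux_shared_edge_diamond (SimpleGraph.mem_cliqueFinset_iff.1 hs₁)
        (SimpleGraph.mem_cliqueFinset_iff.1 hs₂) hne hadj₁.ne ha₁ hb₁ ha₂ hb₂)
    · exact hdiam (aux_shared_edge_diamond (SimpleGraph.mem_cliqueFinset_iff.1 hs₁)
        (SimpleGraph.mem_cliqueFinset_iff.1 hs₂) hne hadj₁.ne ha₁ hb₁ hb₂ ha₂)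
  set S : Finset (Sym2 V) := T.image (pickEdge G) with hSdef
  have hScard : S.card = T.card := Finset.card_image_of_injOn hinj
  have hSsub : S ⊆ E := by
    intro e he
    obtain ⟨s, hs, rfl⟩ := Finset.mem_image.1 he
    obtain ⟨a, b, he', _, _, hadj⟩ := hTspec s hs
    rw [he']
    exact SimpleGraph.mem_edgeFinset.2 hadj
  have htm : T.card ≤ E.card := hScard ▸ Finset.card_le_card hSsub
  -- the graph with chosen edges deleted
  set H := G.deleteEdges (S : Set (Sym2 V)) with hHdef
  have hHadj : ∀ x y, H.Adj x y ↔ G.Adj x y ∧ s(x, y) ∉ S := by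
    intro x y
    rw [hHdef, SimpleGraph.deleteEdges_adj]
    simp
  have hHE : H.edgeFinset = E \ S := by
    ext e
    rw [SimpleGraph.mem_edgeFinset, hHdef, SimpleGraph.edgeSet_deleteEdges]
    simp [hEdef, SimpleGraph.mem_edgeFinset]
  have hHcard : H.edgeFinset.card = E.card - T.card := by
    rw [hHE, Finset.card_sdiff_of_subset hSsub, hScard]
  -- counting: H has fewer than n edges
  have hlt : H.edgeFinset.card < n := by
    have h1 : (E.card : ℤ) - T.card = n - G.numComponents := by
      rw [hm, ht] at heq; linarith
    have h2 : (H.edgeFinset.card : ℤ) = (E.card : ℤ) - T.card := by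
      rw [hHcard]; push_cast [htm]; ring
    have : (H.edgeFinset.card : ℤ) < n := by
      rw [h2, h1]
      have : (1 : ℤ) ≤ G.numComponents := by exact_mod_cast hcc1
      linarith
    exact_mod_cast this
  -- hence a vertex of H-degree at most 1
  have hv : ∃ v : V, H.degree v ≤ 1 := by
    by_contra h
    push_neg at h
    have hsum : ∑ v, H.degree v = 2 * H.edgeFinset.card :=
      SimpleGraph.sum_degrees_eq_twice_card_edges H
    have h2n : 2 * n ≤ ∑ v, H.degree v := by
      calc 2 * n = ∑ _v : V, 2 := by rw [Finset.sum_const, Finset.card_univ]; ring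
      _ ≤ ∑ v, H.degree v := Finset.sum_le_sum fun v _ => h v
    omega
  obtain ⟨v, hvdeg⟩ := hv
  refine ⟨v, ?_⟩
  have hNcard : Nat.card (G.neighborSet v) = G.degree v := by
    rw [Nat.card_eq_fintype_card, SimpleGraph.card_neighborSet_eq_degree]
  rw [hNcard]
  by_contra hdeg
  push_neg at hdeg
  have hdeg3 : 3 ≤ G.degree v := hdeg
  -- the deleted edges at v
  have hsubnbr : H.neighborFinset v ⊆ G.neighborFinset v := by
    intro w hw
    rw [SimpleGraph.mem_neighborFinset] at hw ⊢
    exact ((hHadj v w).1 hw).1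
  have hDcard : 2 ≤ (G.neighborFinset v \ H.neighborFinset v).card := by
    have := Finset.card_sdiff_add_card_eq_card hsubnbr
    rw [SimpleGraph.card_neighborFinset_eq_degree, SimpleGraph.card_neighborFinset_eq_degree]
      at this
    omega
  obtain ⟨w₁, hw₁, w₂, hw₂, hw12⟩ := Finset.one_lt_card.mp hDcard
  -- for each deleted neighbor, produce an H-neighbor inside the triangle
  have key : ∀ w ∈ G.neighborFinset v \ H.neighborFinset v,
      ∃ x s, s ∈ G.cliqueFinset 3 ∧ v ∈ s ∧ w ∈ s ∧ x ∈ s ∧ x ≠ v ∧ x ≠ w ∧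
        pickEdge G s = s(v, w) ∧ x ∈ H.neighborFinset v := by
    intro w hw
    rw [Finset.mem_sdiff, SimpleGraph.mem_neighborFinset, SimpleGraph.mem_neighborFinset]
      at hw
    obtain ⟨hGvw, hnH⟩ := hw
    have hSvw : s(v, w) ∈ S := by
      by_contra hc
      exact hnH ((hHadj v w).2 ⟨hGvw, hc⟩)
    obtain ⟨s, hsT, hpe⟩ := Finset.mem_image.1 hSvw
    obtain ⟨a, b, he', ha, hb, hadj⟩ := hTspec s hsT
    rw [he'] at hpe
    have hvs : v ∈ s ∧ w ∈ s := by
      rcases Sym2.eq_iff.1 hpe with ⟨rfl, rfl⟩ | ⟨rfl, rfl⟩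
      exacts [⟨ha, hb⟩, ⟨hb, ha⟩]
    obtain ⟨hvmem, hwmem⟩ := hvs
    have hscl : G.IsNClique 3 s := SimpleGraph.mem_cliqueFinset_iff.1 hsT
    obtain ⟨x, hxs, hxv, hxw, _⟩ := aux_third_elem hscl.card_eq hvmem hwmem hGvw.ne
    refine ⟨x, s, hsT, hvmem, hwmem, hxs, hxv, hxw, by rw [he', hpe], ?_⟩
    rw [SimpleGraph.mem_neighborFinset, hHadj]
    refine ⟨hscl.1 hvmem hxs (Ne.symm hxv), ?_⟩
    intro hSvx
    obtain ⟨s', hs'T, hpe'⟩ := Finset.mem_image.1 hSvx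
    by_cases hss' : s' = s
    · subst hss'
      rw [he', hpe] at hpe'
      exact hxw (Sym2.congr_right.1 hpe').symm
    · obtain ⟨a', b', he'', ha', hb', hadj'⟩ := hTspec s' hs'T
      rw [he''] at hpe'
      have hvs' : v ∈ s' ∧ x ∈ s' := by
        rcases Sym2.eq_iff.1 hpe' with ⟨rfl, rfl⟩ | ⟨rfl, rfl⟩
        exacts [⟨ha', hb'⟩, ⟨hb', ha'⟩]
      exact hdiam (aux_shared_edge_diamond (SimpleGraph.mem_cliqueFinset_iff.1 hs'T) hscl
        hss' (Ne.symm hxv) hvs'.1 hvs'.2 hvmem hxs)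
  obtain ⟨x₁, s₁, hs₁T, hv₁, hw₁m, hx₁s, hx₁v, hx₁w, hpe₁, hx₁H⟩ := key w₁ hw₁
  obtain ⟨x₂, s₂, hs₂T, hv₂, hw₂m, hx₂s, hx₂v, hx₂w, hpe₂, hx₂H⟩ := key w₂ hw₂
  -- H-degree at most 1 forces the two third-vertices to coincide
  have hx12 : x₁ = x₂ := by
    have hcard : (H.neighborFinset v).card ≤ 1 := by
      rw [SimpleGraph.card_neighborFinset_eq_degree]; exact hvdeg
    exact Finset.card_le_one.1 hcard x₁ hx₁H x₂ hx₂H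
  subst hx12
  have hs12 : s₁ ≠ s₂ := by
    intro h
    rw [h, hpe₂] at hpe₁
    exact hw12 (Sym2.congr_right.1 hpe₁.symm)
  exact hdiam (aux_shared_edge_diamond (SimpleGraph.mem_cliqueFinset_iff.1 hs₁T)
    (SimpleGraph.mem_cliqueFinset_iff.1 hs₂T) hs12 (Ne.symm hx₁v) hv₁ hx₁s hv₂ hx₂s)
end

section
/- For every finite simple graph G, G does not contain the paw as a topological minor if and only if every connected component of G is either a cycle or a tree. -/
open SimpleGraph

/-- The paw: a triangle `{0,1,2}` together with a pendant vertex `3` adjacent to `2`. -/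
def pawGraph : SimpleGraph (Fin 4) :=
  SimpleGraph.fromRel (fun i j =>
    (i = 0 ∧ j = 1) ∨ (i = 0 ∧ j = 2) ∨ (i = 1 ∧ j = 2) ∨ (i = 2 ∧ j = 3))

/-- A graph is a cycle if it is connected and `2`-regular. -/
def SimpleGraph.IsCycleGraph {V : Type*} (G : SimpleGraph V) : Prop :=
  G.Connected ∧ ∀ v, Nat.card (G.neighborSet v) = 2

namespace SimpleGraph.Walk

variable {V : Type*} {G : SimpleGraph V}

private lemma list_dropLast_reverse {α : Type*} (l : List α) :
    l.reverse.dropLast = l.tail.reverse := by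
  exact List.dropLast_reverse

lemma mem_internalSupport_reverse {u v w : V} {p : G.Walk u v} :
    w ∈ p.reverse.internalSupport ↔ w ∈ p.internalSupport := by
  simp only [internalSupport, support_reverse]
  rw [List.tail_reverse, list_dropLast_reverse, List.tail_dropLast,
    List.mem_reverse]

/-- For a path, the internal support is the support minus the endpoints. -/
lemma mem_internalSupport_iff {u v w : V} {p : G.Walk u v} (hp : p.IsPath) :
    w ∈ p.internalSupport ↔ w ∈ p.support ∧ w ≠ u ∧ w ≠ v := by
  rcases p with _ | ⟨h, q⟩
  · simp [internalSupport]
  · rename_i x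
    have hsup : (Walk.cons h q).support = u :: q.support := support_cons _ _
    have hnd : (Walk.cons h q).support.Nodup := hp.support_nodup
    rw [hsup] at hnd
    have hune : u ∉ q.support := (List.nodup_cons.mp hnd).1
    have hqnd : q.support.Nodup := (List.nodup_cons.mp hnd).2
    have hne : q.support ≠ [] := q.support_ne_nil
    have hlast : q.support.getLast hne = v := q.getLast_support
    constructor
    · intro hw
      have hw' : w ∈ q.support.dropLast := by
        simpa [internalSupport, hsup] using hw
      have hwmem : w ∈ q.support := List.dropLast_subset _ hw'
      refine ⟨by simp [hsup, hwmem], ?_, ?_⟩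
      · rintro rfl; exact hune hwmem
      · rintro rfl
        have := List.dropLast_append_getLast hne
        rw [hlast] at this
        have : q.support.Nodup := hqnd
        rw [← List.dropLast_append_getLast hne, hlast] at this
        exact (List.disjoint_of_nodup_append this) hw' (by simp)
    · rintro ⟨hw, hwu, hwv⟩
      have hwq : w ∈ q.support := by
        rcases (by simpa [hsup] using hw : w = u ∨ w ∈ q.support) with rfl | h'
        · exact absurd rfl hwu
        · exact h'
      have : w ∈ q.support.dropLast := by
        rw [← List.dropLast_append_getLast hne, hlast] at hwq
        rcases List.mem_append.mp hwq with h' | h'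
        · exact h'
        · simp at h'; exact absurd h' hwv
      simpa [internalSupport, hsup] using this

lemma internalSupport_subset_support {u v : V} (p : G.Walk u v) :
    ∀ w ∈ p.internalSupport, w ∈ p.support := fun w hw =>
  List.tail_subset _ (List.dropLast_subset _ hw)

lemma internalSupport_single {u v : V} (h : G.Adj u v) :
    (Walk.cons h Walk.nil).internalSupport = [] := rfl

end SimpleGraph.Walk

namespace SimpleGraph.Walk
variable {V : Type*} {G : SimpleGraph V}

/-- Transfer a walk into an induced subgraph containing its support. -/
def induceWalk {s : Set V} : ∀ {u v : V} (p : G.Walk u v), (h : ∀ w ∈ p.support, w ∈ s) →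
    (G.induce s).Walk ⟨u, h u p.start_mem_support⟩ ⟨v, h v p.end_mem_support⟩
  | _, _, Walk.nil, _ => Walk.nil
  | _, _, Walk.cons ha q, h =>
      Walk.cons (by exact ha) (induceWalk q fun w hw => h w (by simp [hw]))

lemma induceWalk_support {s : Set V} : ∀ {u v : V} (p : G.Walk u v)
    (h : ∀ w ∈ p.support, w ∈ s),
    (induceWalk p h).support.map Subtype.val = p.support
  | _, _, Walk.nil, _ => rfl
  | _, _, Walk.cons ha q, h => by
      simp only [induceWalk, support_cons, List.map_cons]
      exact congrArg (_ :: ·) (induceWalk_support q _)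

lemma induceWalk_isPath {s : Set V} {u v : V} {p : G.Walk u v}
    (hp : p.IsPath) (h : ∀ w ∈ p.support, w ∈ s) : (induceWalk p h).IsPath := by
  rw [isPath_def]
  have := hp.support_nodup
  rw [← induceWalk_support p h] at this
  exact this.of_map _

lemma mem_closed_of_walk {S : Set V} (hS : ∀ ⦃a b : V⦄, a ∈ S → G.Adj a b → b ∈ S) :
    ∀ {u x : V}, G.Walk u x → u ∈ S → x ∈ S
  | _, _, Walk.nil, hu => hu
  | _, _, Walk.cons ha q, hu => mem_closed_of_walk hS q (hS hu ha)

lemma IsPath.eq_getVert_one_of_mem_edges {u v w : V} {p : G.Walk u v} (hp : p.IsPath)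
    (hw : s(u, w) ∈ p.edges) : w = p.getVert 1 := by
  induction p with
  | nil => simp at hw
  | cons ha q ih =>
    rename_i x y z
    rw [edges_cons, List.mem_cons] at hw
    rcases hw with hw | hw
    · rw [Sym2.eq_iff] at hw
      rcases hw with ⟨-, rfl⟩ | ⟨rfl, rfl⟩
      · simp [getVert_cons_succ]
      · exact absurd rfl ha.ne
    · exact absurd (fst_mem_support_of_mem_edges q hw) ((cons_isPath_iff _ _).mp hp).2

end SimpleGraph.Walk

namespace SimpleGraph

lemma Walk.internalSupport_map {V W : Type*} {G : SimpleGraph V} {G' : SimpleGraph W}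
    (f : G →g G') {u v : V} (p : G.Walk u v) :
    (p.map f).internalSupport = p.internalSupport.map f := by
  simp only [Walk.internalSupport, Walk.support_map, ← List.map_tail, List.map_dropLast]

lemma IsTopMinor.trans_embedding {U V W : Type*} {P : SimpleGraph U} {H : SimpleGraph V}
    {G : SimpleGraph W} (h : P.IsTopMinor H) (f : H ↪g G) : P.IsTopMinor G := by
  obtain ⟨φ, σ, hinj, hpath, hsymm, hdisj⟩ := h
  refine ⟨fun x => f (φ x), fun x y h => (σ h).map f.toHom, ?_, ?_, ?_, ?_⟩
  · exact f.injective.comp hinj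
  · exact fun x y h => Walk.map_isPath_of_injective f.injective (hpath h)
  · intro x y h
    show Walk.map _ (σ h.symm) = _
    rw [hsymm h, Walk.reverse_map]
  · intro x y x' y' h h' hne w hw
    rw [Walk.internalSupport_map] at hw
    obtain ⟨z, hz, rfl⟩ := List.mem_map.mp hw
    rw [Walk.support_map, List.mem_map]
    rintro ⟨z', hz', hzz⟩
    exact hdisj h h' hne z hz ((f.injective hzz ▸ hz' : z ∈ _))

end SimpleGraph

instance : DecidableRel pawGraph.Adj := fun x y =>
  decidable_of_iff' _ (SimpleGraph.fromRel_adj _ x y)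

set_option maxHeartbeats 2000000 in
lemma pawTopMinor_mk {W : Type*} {H : SimpleGraph W} {a b v w : W}
    (hva : H.Adj v a) (hab : H.Adj a b) (hvw : H.Adj v w)
    (r : H.Walk b v) (hr : r.IsPath)
    (hbv : b ≠ v) (haw : a ≠ w) (hbw : b ≠ w) (hvw' : v ≠ w)
    (hra : ∀ x ∈ r.internalSupport, x ≠ a ∧ x ≠ w) :
    pawGraph.IsTopMinor H := by
  classical
  have hav : a ≠ v := hva.ne'
  have hab' : a ≠ b := hab.ne
  set φ : Fin 4 → W := ![a, b, v, w] with hφ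
  let e01 : H.Walk a b := Walk.cons hab Walk.nil
  let e20 : H.Walk v a := Walk.cons hva Walk.nil
  let e23 : H.Walk v w := Walk.cons hvw Walk.nil
  have key : ∀ z ∈ r.internalSupport, z ≠ a ∧ z ≠ b ∧ z ≠ v ∧ z ≠ w := by
    intro z hz
    obtain ⟨-, h2, h3⟩ := (Walk.mem_internalSupport_iff hr).mp hz
    obtain ⟨h1, h4⟩ := hra z hz
    exact ⟨h1, h2, h3, h4⟩
  let σ : ∀ ⦃x y : Fin 4⦄, pawGraph.Adj x y → H.Walk (φ x) (φ y) := fun x y h =>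
    match x, y, h with
    | 0, 1, _ => e01
    | 1, 0, _ => e01.reverse
    | 0, 2, _ => e20.reverse
    | 2, 0, _ => e20
    | 1, 2, _ => r
    | 2, 1, _ => r.reverse
    | 2, 3, _ => e23
    | 3, 2, _ => e23.reverse
    | 0, 0, h => absurd h (by simp [pawGraph])
    | 1, 1, h => absurd h (by simp [pawGraph])
    | 2, 2, h => absurd h (by simp [pawGraph])
    | 3, 3, h => absurd h (by simp [pawGraph])
    | 0, 3, h => absurd h (by simp [pawGraph])
    | 3, 0, h => absurd h (by simp [pawGraph])
    | 1, 3, h => absurd h (by simp [pawGraph])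
    | 3, 1, h => absurd h (by simp [pawGraph])
  have pe01 : e01.IsPath := by simp [e01, hab.ne]
  have pe20 : e20.IsPath := by simp [e20, hva.ne]
  have pe23 : e23.IsPath := by simp [e23, hvw.ne]
  refine ⟨φ, σ, ?_, ?_, ?_, ?_⟩
  · intro i j hij
    fin_cases i <;> fin_cases j <;>
      first
        | rfl
        | (exfalso; simp only [hφ, Matrix.cons_val_zero, Matrix.cons_val_one, Matrix.head_cons,
            Matrix.cons_val_two, Matrix.tail_cons, Matrix.cons_val_three] at hij; simp_all)
  · intro x y h
    fin_cases x <;> fin_cases y <;>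
      first
        | (exfalso; revert h; decide)
        | exact pe01 | exact pe01.reverse
        | exact pe20 | exact pe20.reverse
        | exact pe23 | exact pe23.reverse
        | exact hr | exact hr.reverse
  · intro x y h
    fin_cases x <;> fin_cases y <;>
      first
        | (exfalso; revert h; decide)
        | rfl
        | exact (Walk.reverse_reverse _).symm
  · intro x y x' y' h h' hne z hz
    fin_cases x <;> fin_cases y <;>
      first
        | (refine absurd h ?_; decide)
        | (fin_cases x' <;> fin_cases y' <;>
            first
              | (refine absurd h' ?_; decide)
              | (exfalso; revert hne; decide)
              | (simp only [σ] at hz; exact absurd (show z ∈ ([] : List W) from hz)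
                  (by simp))
              | ((try replace hz : z ∈ r.internalSupport := Walk.mem_internalSupport_reverse.mp hz);
                 obtain ⟨h1, h2, h3, h4⟩ := key z hz;
                 first
                   | exact (show z ∉ [a, b] by simp [h1, h2, h3, h4])
                   | exact (show z ∉ [b, a] by simp [h1, h2, h3, h4])
                   | exact (show z ∉ [a, v] by simp [h1, h2, h3, h4])
                   | exact (show z ∉ [v, a] by simp [h1, h2, h3, h4])
                   | exact (show z ∉ [v, w] by simp [h1, h2, h3, h4])
                   | exact (show z ∉ [w, v] by simp [h1, h2, h3, h4])))

namespace SimpleGraph.Walk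
variable {V : Type*} {G : SimpleGraph V}

lemma first_edge_mem {u v : V} (p : G.Walk u v) (hp : ¬ p.Nil) :
    s(u, p.getVert 1) ∈ p.edges := by
  cases p with
  | nil => simp at hp
  | cons ha q => simp [edges_cons, getVert_cons_succ]

/-- A chord of a cycle (based at an endpoint of the chord) yields a strictly shorter cycle. -/
lemma shorter_cycle_of_chord [DecidableEq V] {v w : V} {p : G.Walk v v} (hp : p.IsCycle)
    (hw : w ∈ p.support) (hadj : G.Adj v w) (hne : s(v, w) ∉ p.edges) :
    ∃ (q : G.Walk v v), q.IsCycle ∧ q.length < p.length := by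
  have hwv : w ≠ v := hadj.ne'
  set t := p.takeUntil w hw with ht
  set d := p.dropUntil w hw with hd
  have hspec : t.append d = p := p.take_spec hw
  have hsupp : t.support ++ d.support.tail = p.support := by
    rw [← support_append, hspec]
  have hedges : t.edges ++ d.edges = p.edges := by
    rw [← edges_append, hspec]
  have hlen : t.length + d.length = p.length := by
    rw [← length_append, hspec]
  -- support of p
  have hnodup : p.support.tail.Nodup := hp.2
  have hsupp_tail : t.support.tail ++ d.support.tail = p.support.tail := by
    have : t.support = v :: t.support.tail := by
      rw [← support_eq_cons]
    rw [← hsupp, this]; simp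
  have hdnd : d.support.tail.Nodup := by
    rw [← hsupp_tail] at hnodup
    exact hnodup.of_append_right
  have hwt : w ∈ t.support.tail := by
    have : w ∈ t.support := end_mem_support t
    rw [support_eq_cons t] at this
    rcases this with _ | h
    · exact absurd rfl hwv
    · assumption
  have hwd : w ∉ d.support.tail := by
    rw [← hsupp_tail] at hnodup
    exact fun hmem => (List.disjoint_of_nodup_append hnodup) hwt hmem
  have hdsup : d.support.Nodup := by
    rw [support_eq_cons d]
    exact List.nodup_cons.mpr ⟨hwd, hdnd⟩
  have hded : d.edges.Nodup := by
    have := hp.1.1.edges_nodup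
    rw [← hedges] at this
    exact this.of_append_right
  have hsvw : s(v, w) ∉ d.edges := fun hmem => hne (hedges ▸ List.mem_append_right _ hmem)
  refine ⟨Walk.cons hadj d, ?_, ?_⟩
  · constructor
    · constructor
      · rw [isTrail_def, edges_cons]
        exact List.nodup_cons.mpr ⟨hsvw, hded⟩
      · simp
    · simpa using hdsup
  · -- length
    have ht2 : 2 ≤ t.length := by
      rcases Nat.lt_or_ge t.length 2 with h | h
      · interval_cases h' : t.length
        · exact absurd (eq_of_length_eq_zero h') (Ne.symm hwv)
        · exfalso
          have hnn : ¬ t.Nil := by rw [nil_iff_length_eq]; omega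
          have := t.first_edge_mem hnn
          have hgv : t.getVert 1 = w := by
            have := t.getVert_length
            rw [h'] at this; exact this
          rw [hgv] at this
          exact hne (hedges ▸ List.mem_append_left _ this)
      · exact h
    simp only [length_cons]
    omega

end SimpleGraph.Walk

namespace SimpleGraph.Walk
variable {V : Type*} {G : SimpleGraph V}

lemma IsPath.ends_ne {u v : V} {p : G.Walk u v} (hp : p.IsPath) (hn : ¬ p.Nil) : u ≠ v := by
  intro h
  subst h
  rw [isPath_iff_eq_nil] at hp
  subst hp
  exact hn Walk.Nil.nil

lemma mem_support_tail_of_closed {v x : V} {p : G.Walk v v} (hnil : ¬ p.Nil) :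
    x ∈ p.support ↔ x ∈ p.support.tail := by
  constructor
  · intro hx
    rw [support_eq_cons p] at hx
    rcases hx with _ | hx
    · rw [← support_tail_of_not_nil p hnil]
      exact p.tail.end_mem_support
    · assumption
  · exact fun hx => List.tail_subset _ hx

lemma mem_support_rotate [DecidableEq V] {u v x : V} {p : G.Walk v v} (hp : p.IsCycle)
    (h : u ∈ p.support) : x ∈ (p.rotate u h).support ↔ x ∈ p.support := by
  have hnil : ¬ p.Nil := by
    rw [nil_iff_length_eq]
    have := hp.three_le_length; omega
  have hnil' : ¬ (p.rotate u h).Nil := by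
    rw [nil_iff_length_eq, length_rotate]
    have := hp.three_le_length; omega
  rw [mem_support_tail_of_closed hnil, mem_support_tail_of_closed hnil']
  exact (support_rotate p u h).mem_iff

end SimpleGraph.Walk

open SimpleGraph.Walk in
/-- The pendant-cycle construction of a paw topological minor. -/
lemma paw_of_cycle_pendant {W : Type*} {H : SimpleGraph W} {v w : W}
    (p : H.Walk v v) (hp : p.IsCycle) (hadj : H.Adj v w) (hw : w ∉ p.support) :
    pawGraph.IsTopMinor H := by
  have h3 := hp.three_le_length
  have hnil : ¬ p.Nil := by rw [nil_iff_length_eq]; omega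
  set a := p.getVert 1 with ha
  have hva : H.Adj v a := p.adj_snd hnil
  set q := p.tail with hqdef
  have hqsup : q.support = p.support.tail := support_tail_of_not_nil p hnil
  have hq : q.IsPath := by
    rw [isPath_def, hqsup]; exact hp.2
  have hqlen : q.length + 1 = p.length := length_tail_add_one hnil
  have hqnil : ¬ q.Nil := by rw [nil_iff_length_eq]; omega
  set b := q.getVert 1 with hb
  have hab : H.Adj a b := q.adj_snd hqnil
  set r := q.tail with hrdef
  have hr : r.IsPath := hq.tail
  have hrsup : r.support = q.support.tail := support_tail_of_not_nil q hqnil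
  have hqsupp_cons : q.support = a :: r.support := by
    rw [hrsup, ← support_eq_cons]
  have hrlen : r.length + 1 = q.length := length_tail_add_one hqnil
  have hrnil : ¬ r.Nil := by rw [nil_iff_length_eq]; omega
  have haq : a ∈ p.support := by
    rw [mem_support_tail_of_closed hnil, ← hqsup]; exact q.start_mem_support
  have hbq : b ∈ p.support := by
    rw [mem_support_tail_of_closed hnil, ← hqsup, hqsupp_cons]
    right
    exact r.start_mem_support
  have hbv : b ≠ v := hr.ends_ne hrnil
  have har : a ∉ r.support := by
    have := hq.support_nodup
    rw [hqsupp_cons] at this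
    exact (List.nodup_cons.mp this).1
  have hrp : ∀ x ∈ r.support, x ∈ p.support := by
    intro x hx
    rw [mem_support_tail_of_closed hnil, ← hqsup, hqsupp_cons]
    right; exact hx
  refine pawTopMinor_mk hva hab hadj r hr hbv ?_ ?_ ?_ ?_
  · intro h; rw [← h] at hw; exact hw haq
  · intro h; rw [← h] at hw; exact hw hbq
  · intro h; rw [← h] at hw; exact hw p.start_mem_support
  · intro x hx
    have hxs : x ∈ r.support := List.tail_subset _ (List.dropLast_subset _ hx)
    exact ⟨fun hxa => har (hxa ▸ hxs), fun hxw => hw (hxw ▸ hrp x hxs)⟩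

open SimpleGraph.Walk in
/-- A connected graph with a cycle and a vertex of degree ≠ 2 has a paw topological minor. -/
lemma paw_of_connected {W : Type*} {H : SimpleGraph W} (hconn : H.Connected)
    (hcyc : ∃ (u : W) (p : H.Walk u u), p.IsCycle)
    (hdeg : ∃ u, Nat.card (H.neighborSet u) ≠ 2) : pawGraph.IsTopMinor H := by
  classical
  -- minimal length cycle
  set S : Set ℕ := {n | ∃ (u : W) (p : H.Walk u u), p.IsCycle ∧ p.length = n} with hS
  have hSne : ∃ n, n ∈ S := by
    obtain ⟨u, p, hp⟩ := hcyc
    exact ⟨p.length, u, p, hp, rfl⟩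
  obtain ⟨u, p, hp, hplen⟩ := Nat.find_spec hSne
  have hmin : ∀ (x : W) (q : H.Walk x x), q.IsCycle → p.length ≤ q.length := by
    intro x q hq
    rw [hplen]
    exact Nat.find_min' hSne ⟨x, q, hq, rfl⟩
  by_cases hcross : ∃ v ∈ p.support, ∃ w, H.Adj v w ∧ w ∉ p.support
  · obtain ⟨v, hv, w, hadj, hw⟩ := hcross
    have hp' := hp.rotate hv
    refine paw_of_cycle_pendant (p.rotate v hv) hp' hadj ?_
    rw [mem_support_rotate hp hv]
    exact hw
  · push_neg at hcross
    exfalso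
    have hclosed : ∀ ⦃x y : W⦄, x ∈ {z | z ∈ p.support} → H.Adj x y → y ∈ {z | z ∈ p.support} :=
      fun x y hx hxy => hcross x hx y hxy
    have hall : ∀ x, x ∈ p.support := by
      intro x
      exact mem_closed_of_walk hclosed ((hconn u x).some) p.start_mem_support
    obtain ⟨z, hz⟩ := hdeg
    apply hz
    -- rotate the cycle to be based at z
    set p' := p.rotate z (hall z) with hp'def
    have hp' : p'.IsCycle := hp.rotate (hall z)
    have h3 := hp'.three_le_length
    have hlen' : p'.length = p.length := length_rotate p z (hall z)
    have hnil : ¬ p'.Nil := by rw [nil_iff_length_eq]; omega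
    set a := p'.getVert 1 with ha
    have hza : H.Adj z a := p'.adj_snd hnil
    set q := p'.tail with hqdef
    have hqsup : q.support = p'.support.tail := support_tail_of_not_nil p' hnil
    have hq : q.IsPath := by rw [isPath_def, hqsup]; exact hp'.2
    have hqlen : q.length + 1 = p'.length := length_tail_add_one hnil
    have hqnil : ¬ q.Nil := by rw [nil_iff_length_eq]; omega
    have hqrnil : ¬ q.reverse.Nil := by rw [nil_iff_length_eq, length_reverse]; omega
    set b := q.reverse.getVert 1 with hb
    have hzb : H.Adj z b := q.reverse.adj_snd hqrnil
    have hcons : Walk.cons (p'.adj_snd hnil) p'.tail = p' := cons_tail_eq p' hnil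
    have hedges : p'.edges = s(z, a) :: q.edges := by
      conv_lhs => rw [← hcons]
      rfl
    have hnd : p'.edges.Nodup := hp'.1.1.edges_nodup
    have hza_notq : s(z, a) ∉ q.edges := by
      rw [hedges] at hnd
      exact (List.nodup_cons.mp hnd).1
    have hzb_q : s(z, b) ∈ q.edges := by
      have := q.reverse.first_edge_mem hqrnil
      rw [edges_reverse, List.mem_reverse] at this
      exact this
    have hab : a ≠ b := by
      intro h
      rw [h] at hza_notq
      exact hza_notq hzb_q
    -- every neighbor of z is a or b
    have hnbr : H.neighborSet z = {a, b} := by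
      ext x
      simp only [mem_neighborSet, Set.mem_insert_iff, Set.mem_singleton_iff]
      constructor
      · intro hzx
        by_cases hmem : s(z, x) ∈ p'.edges
        · rw [hedges, List.mem_cons] at hmem
          rcases hmem with hmem | hmem
          · rw [Sym2.eq_iff] at hmem
            rcases hmem with ⟨-, hxa⟩ | ⟨hza', -⟩
            · exact Or.inl hxa
            · exact absurd hza'.symm hza.ne'
          · right
            have : s(z, x) ∈ q.reverse.edges := by
              rw [edges_reverse, List.mem_reverse]; exact hmem
            exact hq.reverse.eq_getVert_one_of_mem_edges this
        · exfalso
          obtain ⟨c, hc, hclen⟩ := shorter_cycle_of_chord hp'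
            ((mem_support_rotate hp (hall z)).mpr (hall x)) hzx hmem
          have := hmin z c hc
          omega
      · rintro (rfl | rfl)
        · exact hza
        · exact hzb
    rw [hnbr, Nat.card_coe_set_eq, Set.ncard_pair hab]

section Components

variable {V : Type*} {G : SimpleGraph V}

lemma supp_closed (c : G.ConnectedComponent) :
    ∀ ⦃a b : V⦄, a ∈ c.supp → G.Adj a b → b ∈ c.supp := by
  intro a b ha hab
  rw [ConnectedComponent.mem_supp_iff] at ha ⊢
  rw [← ha]
  exact (SimpleGraph.ConnectedComponent.connectedComponentMk_eq_of_adj hab).symm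

lemma walk_supp_subset (c : G.ConnectedComponent) {x y : V} (hx : x ∈ c.supp)
    (p : G.Walk x y) : ∀ w ∈ p.support, w ∈ c.supp := by
  classical
  intro w hw
  rw [ConnectedComponent.mem_supp_iff] at hx ⊢
  rw [← hx]
  exact (ConnectedComponent.sound ⟨(p.takeUntil w hw).reverse⟩)

lemma induce_supp_connected (c : G.ConnectedComponent) : (G.induce c.supp).Connected := by
  rw [connected_iff]
  constructor
  · rintro ⟨x, hx⟩ ⟨y, hy⟩
    have hreach : G.Reachable x y := by
      rw [ConnectedComponent.mem_supp_iff] at hx hy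
      exact ConnectedComponent.exact (hx.trans hy.symm)
    obtain ⟨p⟩ := hreach
    exact ⟨p.induceWalk (walk_supp_subset c hx p)⟩
  · obtain ⟨v, hv⟩ := c.exists_rep
    exact ⟨⟨v, by rw [ConnectedComponent.mem_supp_iff]; exact hv⟩⟩

lemma card_neighbor_induce (c : G.ConnectedComponent) {v : V} (hv : v ∈ c.supp) :
    Nat.card ((G.induce c.supp).neighborSet ⟨v, hv⟩) = Nat.card (G.neighborSet v) := by
  apply Nat.card_congr
  refine ⟨fun x => ⟨x.1.1, x.2⟩, fun x => ⟨⟨x.1, supp_closed c hv x.2⟩, x.2⟩, ?_, ?_⟩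
  · rintro ⟨⟨w, hw⟩, hadj⟩; rfl
  · rintro ⟨w, hadj⟩; rfl

end Components

/-- `G` does not contain the paw as a topological minor iff every connected component of `G`
is either a cycle or a tree. -/
theorem statement_13 {V : Type} [Fintype V] (G : SimpleGraph V) :
    ¬ pawGraph.IsTopMinor G ↔
      ∀ c : G.ConnectedComponent,
        (G.induce c.supp).IsCycleGraph ∨ (G.induce c.supp).IsTree := by
  constructor
  · -- no paw minor ⇒ every component is a cycle or a tree
    intro hnm c
    by_contra hcon
    push_neg at hcon
    obtain ⟨hnotcyc, hnottree⟩ := hcon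
    set H := G.induce c.supp with hH
    have hHconn : H.Connected := induce_supp_connected c
    have hcyc : ∃ (u : c.supp) (p : H.Walk u u), p.IsCycle := by
      by_contra hacyc
      push_neg at hacyc
      exact hnottree ⟨hHconn, fun u p hp => hacyc u p hp⟩
    have hdeg : ∃ u : c.supp, Nat.card (H.neighborSet u) ≠ 2 := by
      by_contra hdeg
      push_neg at hdeg
      exact hnotcyc ⟨hHconn, hdeg⟩
    exact hnm ((paw_of_connected hHconn hcyc hdeg).trans_embedding (Embedding.induce c.supp))
  · -- every component nice ⇒ no paw minor
    intro hcomp hm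
    obtain ⟨φ, σ, hinj, hpath, hsymm, hdisj⟩ := hm
    have h01 : pawGraph.Adj 0 1 := by decide
    have h20 : pawGraph.Adj 2 0 := by decide
    have h21 : pawGraph.Adj 2 1 := by decide
    have h23 : pawGraph.Adj 2 3 := by decide
    have hφne : ∀ i j : Fin 4, i ≠ j → φ i ≠ φ j := fun i j hij h => hij (hinj h)
    set c := G.connectedComponentMk (φ 2) with hc
    have hmem2 : φ 2 ∈ c.supp := by rw [ConnectedComponent.mem_supp_iff]
    -- supports of the relevant paths are inside the component
    have hsup20 : ∀ w ∈ (σ h20).support, w ∈ c.supp := walk_supp_subset c hmem2 _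
    have hsup21 : ∀ w ∈ (σ h21).support, w ∈ c.supp := walk_supp_subset c hmem2 _
    have hsup23 : ∀ w ∈ (σ h23).support, w ∈ c.supp := walk_supp_subset c hmem2 _
    have hmem0 : φ 0 ∈ c.supp := hsup20 _ (σ h20).end_mem_support
    have hsup01 : ∀ w ∈ (σ h01).support, w ∈ c.supp := walk_supp_subset c hmem0 _
    -- basic nil facts
    have hn20 : ¬ (σ h20).Nil := Walk.not_nil_of_ne (hφne 2 0 (by decide))
    have hn21 : ¬ (σ h21).Nil := Walk.not_nil_of_ne (hφne 2 1 (by decide))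
    have hn23 : ¬ (σ h23).Nil := Walk.not_nil_of_ne (hφne 2 3 (by decide))
    -- endpoints of other edges are not internal to paths, and vice versa
    rcases hcomp c with hcyc | htree
    · -- cycle component: φ 2 has three distinct neighbors, contradiction
      obtain ⟨-, hdeg⟩ := hcyc
      set x0 := (σ h20).getVert 1 with hx0
      set x1 := (σ h21).getVert 1 with hx1
      set x3 := (σ h23).getVert 1 with hx3
      have ha0 : G.Adj (φ 2) x0 := (σ h20).adj_snd hn20
      have ha1 : G.Adj (φ 2) x1 := (σ h21).adj_snd hn21
      have ha3 : G.Adj (φ 2) x3 := (σ h23).adj_snd hn23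
      have hm0 : x0 ∈ (σ h20).support :=
        Walk.mem_support_iff_exists_getVert.mpr ⟨1, rfl, by
          rw [Walk.not_nil_iff_lt_length] at hn20; omega⟩
      have hm1 : x1 ∈ (σ h21).support :=
        Walk.mem_support_iff_exists_getVert.mpr ⟨1, rfl, by
          rw [Walk.not_nil_iff_lt_length] at hn21; omega⟩
      have hm3 : x3 ∈ (σ h23).support :=
        Walk.mem_support_iff_exists_getVert.mpr ⟨1, rfl, by
          rw [Walk.not_nil_iff_lt_length] at hn23; omega⟩
      have hne0 : x0 ≠ φ 2 := fun h => ha0.ne' (h ▸ rfl)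
      have hne1 : x1 ≠ φ 2 := fun h => ha1.ne' (h ▸ rfl)
      have hne3 : x3 ≠ φ 2 := fun h => ha3.ne' (h ▸ rfl)
      -- internal-or-endpoint dichotomy
      have hcase0 : x0 = φ 0 ∨ x0 ∈ (σ h20).internalSupport := by
        by_cases h : x0 = φ 0
        · exact Or.inl h
        · exact Or.inr ((Walk.mem_internalSupport_iff (hpath h20)).mpr ⟨hm0, hne0, h⟩)
      have hcase1 : x1 = φ 1 ∨ x1 ∈ (σ h21).internalSupport := by
        by_cases h : x1 = φ 1
        · exact Or.inl h
        · exact Or.inr ((Walk.mem_internalSupport_iff (hpath h21)).mpr ⟨hm1, hne1, h⟩)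
      have hcase3 : x3 = φ 3 ∨ x3 ∈ (σ h23).internalSupport := by
        by_cases h : x3 = φ 3
        · exact Or.inl h
        · exact Or.inr ((Walk.mem_internalSupport_iff (hpath h23)).mpr ⟨hm3, hne3, h⟩)
      -- φ 3 is not on the triangle paths
      have hφ3_20 : φ 3 ∉ (σ h20).support := by
        intro hmem
        have : φ 3 ∈ (σ h20).internalSupport :=
          (Walk.mem_internalSupport_iff (hpath h20)).mpr
            ⟨hmem, hφne 3 2 (by decide), hφne 3 0 (by decide)⟩
        exact hdisj h20 h23 (by decide) _ this (σ h23).end_mem_support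
      have hφ3_21 : φ 3 ∉ (σ h21).support := by
        intro hmem
        have : φ 3 ∈ (σ h21).internalSupport :=
          (Walk.mem_internalSupport_iff (hpath h21)).mpr
            ⟨hmem, hφne 3 2 (by decide), hφne 3 1 (by decide)⟩
        exact hdisj h21 h23 (by decide) _ this (σ h23).end_mem_support
      -- φ 0 not on σ h21, φ 1 not on σ h20
      have hφ0_21 : φ 0 ∉ (σ h21).support := by
        intro hmem
        have : φ 0 ∈ (σ h21).internalSupport :=
          (Walk.mem_internalSupport_iff (hpath h21)).mpr
            ⟨hmem, hφne 0 2 (by decide), hφne 0 1 (by decide)⟩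
        exact hdisj h21 h20 (by decide) _ this (σ h20).end_mem_support
      have hφ1_20 : φ 1 ∉ (σ h20).support := by
        intro hmem
        have : φ 1 ∈ (σ h20).internalSupport :=
          (Walk.mem_internalSupport_iff (hpath h20)).mpr
            ⟨hmem, hφne 1 2 (by decide), hφne 1 0 (by decide)⟩
        exact hdisj h20 h21 (by decide) _ this (σ h21).end_mem_support
      -- pairwise distinct
      have d01 : x0 ≠ x1 := by
        intro h
        rcases hcase0 with h0 | h0
        · exact hφ0_21 (h0 ▸ h ▸ hm1)
        · exact hdisj h20 h21 (by decide) _ h0 (h ▸ hm1)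
      have d03 : x0 ≠ x3 := by
        intro h
        rcases hcase3 with h3 | h3
        · exact hφ3_20 (h3 ▸ h.symm ▸ hm0)
        · exact hdisj h23 h20 (by decide) _ h3 (h ▸ hm0)
      have d13 : x1 ≠ x3 := by
        intro h
        rcases hcase3 with h3 | h3
        · exact hφ3_21 (h3 ▸ h.symm ▸ hm1)
        · exact hdisj h23 h21 (by decide) _ h3 (h ▸ hm1)
      -- three neighbors in the induced graph
      have hmx0 : x0 ∈ c.supp := supp_closed c hmem2 ha0
      have hmx1 : x1 ∈ c.supp := supp_closed c hmem2 ha1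
      have hmx3 : x3 ∈ c.supp := supp_closed c hmem2 ha3
      have hsub : ({⟨x0, hmx0⟩, ⟨x1, hmx1⟩, ⟨x3, hmx3⟩} : Set c.supp) ⊆
          (G.induce c.supp).neighborSet ⟨φ 2, hmem2⟩ := by
        rintro z (rfl | rfl | rfl)
        · exact ha0
        · exact ha1
        · exact ha3
      have hcard3 : (({⟨x0, hmx0⟩, ⟨x1, hmx1⟩, ⟨x3, hmx3⟩} : Set c.supp)).ncard = 3 := by
        rw [Set.ncard_insert_of_notMem (by
            simp only [Set.mem_insert_iff, Set.mem_singleton_iff, Subtype.mk.injEq]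
            push_neg
            exact ⟨d01, d03⟩) (Set.toFinite _),
          Set.ncard_pair (by simp only [ne_eq, Subtype.mk.injEq]; exact d13)]
      have hle := Set.ncard_le_ncard hsub (Set.toFinite _)
      have := hdeg ⟨φ 2, hmem2⟩
      rw [Nat.card_coe_set_eq] at this
      omega
    · -- tree component: two distinct paths from φ 2 to φ 1, contradiction
      have hQdisj : ∀ x ∈ (σ h20).support, x ∈ (σ h01).support.tail → False := by
        intro x hx20 hxtail
        have hx01 : x ∈ (σ h01).support := List.tail_subset _ hxtail
        have hxne0 : x ≠ φ 0 := by
          intro h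
          have := (hpath h01).support_nodup
          rw [Walk.support_eq_cons] at this
          exact (List.nodup_cons.mp this).1 (h ▸ hxtail)
        by_cases hx1 : x = φ 1
        · have : φ 1 ∈ (σ h20).internalSupport :=
            (Walk.mem_internalSupport_iff (hpath h20)).mpr
              ⟨hx1 ▸ hx20, hφne 1 2 (by decide), hφne 1 0 (by decide)⟩
          exact hdisj h20 h01 (by decide) _ this (hx1 ▸ hx01)
        · have : x ∈ (σ h01).internalSupport :=
            (Walk.mem_internalSupport_iff (hpath h01)).mpr ⟨hx01, hxne0, hx1⟩
          exact hdisj h01 h20 (by decide) _ this hx20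
      set Q := (σ h20).append (σ h01) with hQ
      have hQpath : Q.IsPath := by
        rw [Walk.isPath_def, hQ, Walk.support_append]
        apply List.Nodup.append (hpath h20).support_nodup
          ((hpath h01).support_nodup.sublist (List.tail_sublist _))
        intro x hx hx'
        exact hQdisj x hx hx'
      have hsupQ : ∀ w ∈ Q.support, w ∈ c.supp := walk_supp_subset c hmem2 _
      have hφ0_21 : φ 0 ∉ (σ h21).support := by
        intro hmem
        have : φ 0 ∈ (σ h21).internalSupport :=
          (Walk.mem_internalSupport_iff (hpath h21)).mpr
            ⟨hmem, hφne 0 2 (by decide), hφne 0 1 (by decide)⟩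
        exact hdisj h21 h20 (by decide) _ this (σ h20).end_mem_support
      have hφ0_Q : φ 0 ∈ Q.support := by
        rw [hQ, Walk.mem_support_append_iff]
        exact Or.inl (σ h20).end_mem_support
      -- lift to the induced graph and use path uniqueness
      have hacyc : (G.induce c.supp).IsAcyclic := htree.2
      have hP' := Walk.induceWalk_isPath (hpath h21) hsup21
      have hQ' := Walk.induceWalk_isPath hQpath hsupQ
      have hPQ : ((σ h21).induceWalk hsup21) = (Q.induceWalk hsupQ) := by
        have := isAcyclic_iff_path_unique.mp hacyc
          ⟨(σ h21).induceWalk hsup21, hP'⟩ ⟨Q.induceWalk hsupQ, hQ'⟩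
        exact congrArg Subtype.val this
      have hsupp_eq : (σ h21).support = Q.support := by
        rw [← Walk.induceWalk_support (σ h21) hsup21, ← Walk.induceWalk_support Q hsupQ, hPQ]
      rw [← hsupp_eq] at hφ0_Q
      exact hφ0_21 hφ0_Q
end

section
/- If G is a connected finite simple graph that contains at least one cycle and does not contain the paw as a topological minor, then G is a cycle (i.e., G is connected and 2-regular). -/
open SimpleGraph

instance inst_s14 : DecidableRel pawGraph.Adj := fun i j =>
  decidable_of_iff _ (SimpleGraph.fromRel_adj _ i j).symm

lemma aux_mem_internalSupport {V : Type*} {G : SimpleGraph V} {x y : V} {p : G.Walk x y}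
    (hp : p.IsPath) {z : V} (hz : z ∈ p.internalSupport) :
    z ∈ p.support ∧ z ≠ x ∧ z ≠ y := by
  have hnd : p.support.Nodup := hp.support_nodup
  have hzt : z ∈ p.support.tail := List.dropLast_subset _ hz
  have hzs : z ∈ p.support := List.mem_of_mem_tail hzt
  have hne : p.support.tail ≠ [] := List.ne_nil_of_mem hzt
  have hxt : x ∉ p.support.tail := by
    have h := hnd; rw [p.support_eq_cons] at h; exact (List.nodup_cons.mp h).1
  have h4 : p.support.dropLast ++ [y] = p.support := by
    have h := List.dropLast_append_getLast (l := p.support) (by simp)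
    rwa [p.getLast_support] at h
  have h5 : y ∉ p.support.dropLast := by
    have hnd2 := hnd; rw [← h4] at hnd2
    exact fun hy => (List.disjoint_of_nodup_append hnd2) hy (by simp)
  have h6 : p.support.dropLast = x :: p.support.tail.dropLast := by
    obtain ⟨m, ms, hms⟩ := List.exists_cons_of_ne_nil hne
    rw [p.support_eq_cons, hms]
    simp
  refine ⟨hzs, fun h => hxt (h ▸ hzt), fun h => ?_⟩
  have : z ∈ p.support.dropLast := by rw [h6]; exact List.mem_cons_of_mem _ hz
  exact h5 (h ▸ this)

lemma aux_edge_isPath {V : Type*} {G : SimpleGraph V} {x y : V} (h : G.Adj x y) :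
    h.toWalk.IsPath := by
  simp [SimpleGraph.Adj.toWalk, SimpleGraph.Walk.isPath_def, h.ne]

lemma aux_not_mem_edge_support {V : Type*} {G : SimpleGraph V} {x y z : V} (h : G.Adj x y)
    (hzx : z ≠ x) (hzy : z ≠ y) : z ∉ h.toWalk.support := by
  simp [SimpleGraph.Adj.toWalk, hzx, hzy]

def pawSigma {V : Type*} {G : SimpleGraph V} {a b v w : V} (r : G.Walk a b)
    (h1 : G.Adj v a) (h2 : G.Adj b v) (hw : G.Adj v w) :
    ∀ ⦃x y : Fin 4⦄, pawGraph.Adj x y → G.Walk (![a, b, v, w] x) (![a, b, v, w] y) :=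
  fun x y h =>
    match x, y, h with
    | 0, 1, _ => r
    | 1, 0, _ => r.reverse
    | 0, 2, _ => h1.symm.toWalk
    | 2, 0, _ => h1.toWalk
    | 1, 2, _ => h2.toWalk
    | 2, 1, _ => h2.symm.toWalk
    | 2, 3, _ => hw.toWalk
    | 3, 2, _ => hw.symm.toWalk
    | 0, 0, h => absurd h (by decide)
    | 0, 3, h => absurd h (by decide)
    | 1, 1, h => absurd h (by decide)
    | 1, 3, h => absurd h (by decide)
    | 2, 2, h => absurd h (by decide)
    | 3, 0, h => absurd h (by decide)
    | 3, 1, h => absurd h (by decide)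
    | 3, 3, h => absurd h (by decide)

lemma paw_mk {V : Type*} {G : SimpleGraph V} {a b v w : V} (r : G.Walk a b) (hr : r.IsPath)
    (h1 : G.Adj v a) (h2 : G.Adj b v) (hw : G.Adj v w)
    (hv : v ∉ r.support) (hwr : w ∉ r.support) (hab : a ≠ b) (hwa : w ≠ a) (hwb : w ≠ b) :
    pawGraph.IsTopMinor G := by
  have hav : a ≠ v := h1.ne'
  have hbv : b ≠ v := h2.ne
  have hvw : v ≠ w := hw.ne
  refine ⟨![a, b, v, w], pawSigma r h1 h2 hw, ?_, ?_, ?_, ?_⟩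
  · intro i j hij
    fin_cases i <;> fin_cases j <;> simp_all
  · intro x y h
    fin_cases x <;> fin_cases y <;>
      first
        | exact absurd h (by decide)
        | exact hr
        | exact hr.reverse
        | exact aux_edge_isPath h1.symm
        | exact aux_edge_isPath h1
        | exact aux_edge_isPath h2
        | exact aux_edge_isPath h2.symm
        | exact aux_edge_isPath hw
        | exact aux_edge_isPath hw.symm
  · intro x y h
    fin_cases x <;> fin_cases y <;>
      first
        | exact absurd h (by decide)
        | rfl
        | exact (SimpleGraph.Walk.reverse_reverse _).symm
  · intro x y x' y' h h' hne z hz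
    fin_cases x <;> fin_cases y <;>
      first
        | exact absurd h (by decide)
        | exact absurd hz List.not_mem_nil
        | skip
    all_goals
      first
        | (have hz' : z ∈ r.support ∧ z ≠ a ∧ z ≠ b := aux_mem_internalSupport hr hz
           obtain ⟨hzs, hza, hzb⟩ := hz')
        | (have hz'' := aux_mem_internalSupport hr.reverse hz
           obtain ⟨hzs', hzb, hza⟩ := hz''
           have hzs : z ∈ r.support := by
             rwa [SimpleGraph.Walk.support_reverse, List.mem_reverse] at hzs')
    all_goals (
      have hzv : z ≠ v := fun hh => hv (hh ▸ hzs)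
      have hzw : z ≠ w := fun hh => hwr (hh ▸ hzs)
      fin_cases x' <;> fin_cases y' <;>
        first
          | exact absurd h' (by decide)
          | exact absurd rfl hne
          | exact absurd Sym2.eq_swap hne
          | exact aux_not_mem_edge_support _ hzv hza
          | exact aux_not_mem_edge_support _ hza hzv
          | exact aux_not_mem_edge_support _ hzb hzv
          | exact aux_not_mem_edge_support _ hzv hzb
          | exact aux_not_mem_edge_support _ hzv hzw
          | exact aux_not_mem_edge_support _ hzw hzv)

lemma aux_cycle_decomp {V : Type*} {G : SimpleGraph V} {u : V} (c : G.Walk u u)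
    (hc : c.IsCycle) :
    ∃ (a b : V) (h1 : G.Adj u a) (r : G.Walk a b) (h2 : G.Adj b u),
      c = Walk.cons h1 (r.concat h2) ∧ r.IsPath ∧ u ∉ r.support ∧ a ≠ b ∧
      c.length = r.length + 2 := by
  have h3 : 3 ≤ c.length := hc.three_le_length
  have hn : ¬ c.Nil := Walk.not_nil_iff_lt_length.mpr (by omega)
  obtain ⟨a, h1, q, rfl⟩ := Walk.not_nil_iff.mp hn
  have hqn : ¬ q.Nil := by
    rw [Walk.length_cons] at h3
    exact Walk.not_nil_iff_lt_length.mpr (by omega)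
  have hqrn : ¬ q.reverse.Nil := by
    rw [Walk.not_nil_iff_lt_length, Walk.length_reverse]
    exact Walk.not_nil_iff_lt_length.mp hqn
  obtain ⟨b, h2', r', hq⟩ := Walk.not_nil_iff.mp hqrn
  have hq' : q = r'.reverse.concat h2'.symm := by
    rw [← Walk.reverse_reverse q, hq, Walk.reverse_cons, Walk.concat_eq_append]
  set r : G.Walk a b := r'.reverse with hr
  rw [Walk.cons_isCycle_iff] at hc
  have hpath : (r.concat h2'.symm).IsPath := hq' ▸ hc.1
  have hsup : (r.support ++ [u]).Nodup := by
    have h := hpath.support_nodup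
    rwa [Walk.support_concat] at h
  have hrn : r.IsPath := by
    rw [Walk.isPath_def]
    exact (List.nodup_append.mp hsup).1
  have hur : u ∉ r.support := by
    intro hmem
    exact (List.disjoint_of_nodup_append hsup) hmem (by simp)
  have hab : a ≠ b := by
    intro hab
    subst hab
    have : r = Walk.nil := Walk.isPath_iff_eq_nil.mp hrn
    rw [hq', this] at h3
    simp at h3
  refine ⟨a, b, h1, r, h2'.symm, by rw [hq'], hrn, hur, hab, ?_⟩
  rw [Walk.length_cons, hq', Walk.length_concat]

lemma aux_length_rotate {V : Type*} [DecidableEq V] {G : SimpleGraph V} {v u : V} {c : G.Walk v v}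
    (h : u ∈ c.support) : (c.rotate u h).length = c.length := by
  conv_rhs => rw [← c.take_spec h]
  rw [Walk.rotate, Walk.length_append, Walk.length_append, Nat.add_comm]

lemma aux_mem_rotate {V : Type*} [DecidableEq V] {G : SimpleGraph V} {v u : V} {c : G.Walk v v}
    (h : u ∈ c.support) {x : V} : x ∈ (c.rotate u h).support ↔ x ∈ c.support := by
  conv_rhs => rw [← c.take_spec h]
  rw [Walk.rotate, Walk.mem_support_append_iff, Walk.mem_support_append_iff, or_comm]

lemma key_lemma {V : Type*} [DecidableEq V] {G : SimpleGraph V} (hpaw : ¬ pawGraph.IsTopMinor G)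
    {v0 : V} (c0 : G.Walk v0 v0) (hc0 : c0.IsCycle)
    (hmin : ∀ ⦃u : V⦄ (c' : G.Walk u u), c'.IsCycle → c0.length ≤ c'.length)
    {u : V} (hu : u ∈ c0.support) :
    ∃ a b : V, a ≠ b ∧ a ∈ c0.support ∧ b ∈ c0.support ∧ G.neighborSet u = {a, b} := by
  have hc' : (c0.rotate u hu).IsCycle := hc0.rotate hu
  have hlen : (c0.rotate u hu).length = c0.length := aux_length_rotate hu
  obtain ⟨a, b, h1, r, h2, hdecomp, hr, hur, hab, hlen2⟩ := aux_cycle_decomp _ hc'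
  have hmem : ∀ x, x ∈ (c0.rotate u hu).support ↔ (x = u ∨ x ∈ r.support) := by
    intro x
    rw [hdecomp, Walk.support_cons, Walk.support_concat]
    simp only [List.mem_cons, List.mem_append, List.mem_singleton]
    tauto
  have hac : a ∈ c0.support := (aux_mem_rotate hu).mp ((hmem a).mpr (Or.inr r.start_mem_support))
  have hbc : b ∈ c0.support := (aux_mem_rotate hu).mp ((hmem b).mpr (Or.inr r.end_mem_support))
  refine ⟨a, b, hab, hac, hbc, ?_⟩
  ext x
  simp only [mem_neighborSet, Set.mem_insert_iff, Set.mem_singleton_iff]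
  constructor
  · intro hadj
    by_contra hcon
    push_neg at hcon
    obtain ⟨hxa, hxb⟩ := hcon
    by_cases hxc : x ∈ r.support
    · -- chord case: build a shorter cycle, contradiction with minimality
      have ht : (r.takeUntil x hxc).IsPath := hr.takeUntil hxc
      have hut : u ∉ (r.takeUntil x hxc).support :=
        fun hh => hur (Walk.support_takeUntil_subset _ hxc hh)
      have hp : (Walk.cons h1 (r.takeUntil x hxc)).IsPath :=
        (Walk.cons_isPath_iff _ _).mpr ⟨ht, hut⟩
      have hcyc2 : (Walk.cons hadj (Walk.cons h1 (r.takeUntil x hxc)).reverse).IsCycle := by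
        rw [Walk.cons_isCycle_iff]
        refine ⟨hp.reverse, ?_⟩
        rw [Walk.edges_reverse, List.mem_reverse, Walk.edges_cons]
        intro hmem2
        rcases List.mem_cons.mp hmem2 with heq | hmem3
        · rw [Sym2.eq_iff] at heq
          rcases heq with ⟨-, hh⟩ | ⟨hh, -⟩
          · exact hxa hh
          · exact h1.ne hh
        · exact hut (Walk.fst_mem_support_of_mem_edges _ hmem3)
      have hlc : (Walk.cons hadj (Walk.cons h1 (r.takeUntil x hxc)).reverse).length
          = (r.takeUntil x hxc).length + 2 := by
        simp [Walk.length_cons, Walk.length_reverse]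
      have hdrop0 : (r.dropUntil x hxc).length ≠ 0 :=
        fun h0 => hxb (Walk.eq_of_length_eq_zero h0)
      have hsum : (r.takeUntil x hxc).length + (r.dropUntil x hxc).length = r.length := by
        rw [← Walk.length_append, r.take_spec hxc]
      have := hmin _ hcyc2
      omega
    · -- pendant case: paw topological minor, contradiction
      have hxu : x ≠ u := fun hh => G.irrefl (hh ▸ hadj)
      exact absurd (paw_mk r hr h1 h2 hadj hur hxc hab hxa hxb) hpaw
  · rintro (rfl | rfl)
    · exact h1
    · exact h2.symm


/-- A connected finite simple graph that contains at least one cycle and has no paw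
topological minor is a cycle. -/
theorem statement_14 {V : Type} [Fintype V] (G : SimpleGraph V)
    (hconn : G.Connected) (hcyc : ¬ G.IsAcyclic) (hpaw : ¬ pawGraph.IsTopMinor G) :
    G.IsCycleGraph := by
  classical
  refine ⟨hconn, ?_⟩
  have hex : ∃ n, ∃ (v : V) (c : G.Walk v v), c.IsCycle ∧ c.length = n := by
    rw [SimpleGraph.IsAcyclic] at hcyc
    push_neg at hcyc
    obtain ⟨v, c, hc⟩ := hcyc
    exact ⟨c.length, v, c, hc, rfl⟩
  obtain ⟨v0, c0, hc0, hlen0⟩ := Nat.find_spec hex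
  have hmin : ∀ ⦃u : V⦄ (c' : G.Walk u u), c'.IsCycle → c0.length ≤ c'.length := by
    intro u c' hc'
    rw [hlen0]
    exact Nat.find_min' hex ⟨u, c', hc', rfl⟩
  have key := fun {u : V} (hu : u ∈ c0.support) => key_lemma hpaw c0 hc0 hmin hu
  have hclose : ∀ y ∈ c0.support, ∀ z, G.Adj y z → z ∈ c0.support := by
    intro y hy z hz
    obtain ⟨a, b, hab, ha, hb, hns⟩ := key hy
    have hzm : z ∈ ({a, b} : Set V) := by rw [← hns]; exact hz
    rcases hzm with rfl | rfl
    · exact ha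
    · exact hb
  have hwalk : ∀ {s t : V} (_ : G.Walk s t), s ∈ c0.support → t ∈ c0.support := by
    intro s t W
    induction W with
    | nil => exact id
    | cons hadj p ih => exact fun hs => ih (hclose _ hs _ hadj)
  intro x
  have hx : x ∈ c0.support := by
    obtain ⟨W⟩ := hconn.preconnected v0 x
    exact hwalk W c0.start_mem_support
  obtain ⟨a, b, hab, -, -, hns⟩ := key hx
  rw [hns, Nat.card_coe_set_eq, Set.ncard_pair hab]
end
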